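/- arXiv:2209.05025 — 3 statements merged into one kernel-verified Lean document; each statement's English description precedes it below -/
import Mathlib

section
/- Let 0 < c_1 < c_2 and ζ_1, ζ_2 > −N. There exists a constant C > 0, depending only on d, 𝔰, N, c_1, c_2, ζ_1, ζ_2, such that for all t > 0 and x ∈ ℝ^d: ∫_0^t ∫_{ℝ^d} G_{t−s}^{(c_2,ζ_1)}(x−y) · G_s^{(c_2,ζ_2)}(y) dy ds ≤ C · G_t^{(c_1, ζ_1+ζ_2+N)}(x). -/
open MeasureTheory Real

/-- The Gaussian-type kernel
`G_t^{(c,ζ)}(x) = t^{(ζ−|𝔰|)/N} exp(−c Σ_j (|x_j|^{N/𝔰_j}/t)^{𝔰_j/(N−𝔰_j)})`. -/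
noncomputable def GK (d N : ℕ) (s : Fin d → ℕ) (c ζ t : ℝ) (x : Fin d → ℝ) : ℝ :=
  t ^ ((ζ - ∑ j, (s j : ℝ)) / (N : ℝ)) *
    Real.exp (-c * ∑ j, (|x j| ^ ((N : ℝ) / (s j : ℝ)) / t) ^ ((s j : ℝ) / ((N : ℝ) - (s j : ℝ))))

lemma radon_aux {p : ℝ} (hp : 1 ≤ p) {a b τ₁ τ₂ : ℝ} (ha : 0 ≤ a) (hb : 0 ≤ b)
    (h1 : 0 < τ₁) (h2 : 0 < τ₂) :
    (a + b) ^ p / (τ₁ + τ₂) ^ (p - 1) ≤ a ^ p / τ₁ ^ (p - 1) + b ^ p / τ₂ ^ (p - 1) := by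
  have hτ : 0 < τ₁ + τ₂ := by linarith
  have hw1 : (0:ℝ) ≤ τ₁ / (τ₁ + τ₂) := by positivity
  have hw2 : (0:ℝ) ≤ τ₂ / (τ₁ + τ₂) := by positivity
  have hw : τ₁ / (τ₁ + τ₂) + τ₂ / (τ₁ + τ₂) = 1 := by field_simp
  have key := (convexOn_rpow hp).2 (Set.mem_Ici.2 (div_nonneg ha h1.le))
    (Set.mem_Ici.2 (div_nonneg hb h2.le)) hw1 hw2 hw
  simp only [smul_eq_mul] at key
  have harg : τ₁ / (τ₁ + τ₂) * (a / τ₁) + τ₂ / (τ₁ + τ₂) * (b / τ₂) = (a + b) / (τ₁ + τ₂) := by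
    field_simp
  rw [harg, div_rpow (by linarith) hτ.le, div_rpow ha h1.le, div_rpow hb h2.le] at key
  have hT : (0:ℝ) < (τ₁ + τ₂) ^ p := rpow_pos_of_pos hτ _
  have hT1 : (0:ℝ) < τ₁ ^ p := rpow_pos_of_pos h1 _
  have hT2 : (0:ℝ) < τ₂ ^ p := rpow_pos_of_pos h2 _
  have e : ∀ x : ℝ, 0 < x → x ^ (p - 1) = x ^ p / x := by
    intro x hx; rw [rpow_sub hx, rpow_one]
  rw [e _ hτ, e _ h1, e _ h2, div_div_eq_mul_div, div_div_eq_mul_div, div_div_eq_mul_div]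
  calc (a + b) ^ p * (τ₁ + τ₂) / (τ₁ + τ₂) ^ p
      = (τ₁ + τ₂) * ((a + b) ^ p / (τ₁ + τ₂) ^ p) := by ring
    _ ≤ (τ₁ + τ₂) * (τ₁ / (τ₁ + τ₂) * (a ^ p / τ₁ ^ p) + τ₂ / (τ₁ + τ₂) * (b ^ p / τ₂ ^ p)) :=
        mul_le_mul_of_nonneg_left key hτ.le
    _ = a ^ p * τ₁ / τ₁ ^ p + b ^ p * τ₂ / τ₂ ^ p := by
        field_simp

lemma term_subadd_aux {p : ℝ} (hp : 1 ≤ p) (a b : ℝ) {τ₁ τ₂ : ℝ} (h1 : 0 < τ₁) (h2 : 0 < τ₂) :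
    |a + b| ^ p / (τ₁ + τ₂) ^ (p - 1) ≤ |a| ^ p / τ₁ ^ (p - 1) + |b| ^ p / τ₂ ^ (p - 1) := by
  refine le_trans ?_ (radon_aux hp (abs_nonneg a) (abs_nonneg b) h1 h2)
  have hτ : (0:ℝ) < (τ₁ + τ₂) ^ (p - 1) := rpow_pos_of_pos (by linarith) _
  exact (div_le_div_iff_of_pos_right hτ).2
    (rpow_le_rpow (abs_nonneg _) (abs_add_le a b) (by linarith))

lemma integrable_exp_neg_abs_rpow_aux {b p : ℝ} (hb : 0 < b) (hp : 1 ≤ p) :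
    Integrable fun u : ℝ => exp (-(b * |u| ^ p)) := by
  have hIoi : IntegrableOn (fun u : ℝ => exp (-(b * |u| ^ p))) (Set.Ioi 0) := by
    have h := integrableOn_rpow_mul_exp_neg_mul_rpow (s := 0) (by norm_num) (by linarith) hb
    refine h.congr_fun (fun x hx => ?_) measurableSet_Ioi
    beta_reduce
    rw [rpow_zero, one_mul, abs_of_pos hx, neg_mul]
  rw [← integrableOn_univ, ← Set.Iio_union_Ici (a := (0:ℝ)), integrableOn_union,
    integrableOn_Ici_iff_integrableOn_Ioi]
  refine ⟨?_, hIoi⟩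
  rw [← (Measure.measurePreserving_neg (volume : Measure ℝ)).integrableOn_comp_preimage
      (Homeomorph.neg ℝ).measurableEmbedding]
  simp only [Function.comp_def, abs_neg, Set.neg_preimage, Set.neg_Iio, neg_zero]
  exact hIoi

lemma gauss_scale_aux {b p : ℝ} (hb : 0 < b) (hp : 1 ≤ p) :
    ∫ u : ℝ, exp (-(b * |u| ^ p)) = b ^ (-p⁻¹) * ∫ u : ℝ, exp (-|u| ^ p) := by
  have hp0 : 0 < p := by linarith
  have hbp : 0 < b ^ p⁻¹ := rpow_pos_of_pos hb _
  have h := Measure.integral_comp_mul_left (fun u : ℝ => exp (-|u| ^ p)) (b ^ p⁻¹)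
  have heq : ∀ u : ℝ, exp (-|b ^ p⁻¹ * u| ^ p) = exp (-(b * |u| ^ p)) := by
    intro u
    rw [abs_mul, abs_of_pos hbp, mul_rpow hbp.le (abs_nonneg _),
      ← Real.rpow_mul hb.le, inv_mul_cancel₀ hp0.ne', rpow_one]
  simp only [heq, smul_eq_mul] at h
  rw [h, abs_of_pos (inv_pos.2 hbp), Real.rpow_neg hb.le]

set_option maxHeartbeats 2000000 in
/-- For `0 < c₁ < c₂` and `ζ₁, ζ₂ > −N` there is `C > 0` with
`∫_0^t ∫_{ℝ^d} G_{t−σ}^{(c₂,ζ₁)}(x−y) G_σ^{(c₂,ζ₂)}(y) dy dσ ≤ C G_t^{(c₁,ζ₁+ζ₂+N)}(x)`. -/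
theorem stmt1 (d N : ℕ) (hd : 0 < d) (s : Fin d → ℕ)
    (hs : ∀ j, 0 < s j) (hN : ∀ j, s j < N)
    (c₁ c₂ ζ₁ ζ₂ : ℝ) (hc₁ : 0 < c₁) (hc : c₁ < c₂)
    (hζ₁ : -(N : ℝ) < ζ₁) (hζ₂ : -(N : ℝ) < ζ₂) :
    ∃ C > (0:ℝ), ∀ t > (0:ℝ), ∀ x : Fin d → ℝ,
      (∫ σ in Set.Ioo (0:ℝ) t, ∫ y : Fin d → ℝ,
          GK d N s c₂ ζ₁ (t - σ) (x - y) * GK d N s c₂ ζ₂ σ y)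
        ≤ C * GK d N s c₁ (ζ₁ + ζ₂ + N) t x := by
  -- basic facts
  have hN0 : (0:ℝ) < N := by
    exact_mod_cast (hs ⟨0, hd⟩).trans (hN ⟨0, hd⟩)
  have hsR : ∀ j, (0:ℝ) < s j := fun j => by exact_mod_cast hs j
  have hNs : ∀ j, (0:ℝ) < (N:ℝ) - s j := fun j => by
    have : (s j : ℝ) < N := by exact_mod_cast hN j
    linarith
  set S : ℝ := ∑ j, (s j : ℝ) with hSdef
  set r : Fin d → ℝ := fun j => (N:ℝ) / ((N:ℝ) - s j) with hrdef
  have hr1 : ∀ j, 1 < r j := fun j => by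
    rw [hrdef]
    exact (one_lt_div (hNs j)).2 (by linarith [hsR j])
  have hrq : ∀ j, r j - 1 = (s j : ℝ) / ((N:ℝ) - s j) := fun j => by
    rw [hrdef]
    rw [div_sub_one (hNs j).ne']
    ring_nf
  set Φ : ℝ → (Fin d → ℝ) → ℝ := fun τ z => ∑ j, |z j| ^ r j / τ ^ (r j - 1) with hΦdef
  have hΦnonneg : ∀ τ z, 0 < τ → 0 ≤ Φ τ z := fun τ z hτ =>
    Finset.sum_nonneg fun j _ =>
      div_nonneg (rpow_nonneg (abs_nonneg _) _) (rpow_pos_of_pos hτ _).le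
  have hGK : ∀ (c ζ τ : ℝ), 0 < τ → ∀ z : Fin d → ℝ,
      GK d N s c ζ τ z = τ ^ ((ζ - S) / N) * exp (-c * Φ τ z) := by
    intro c ζ τ hτ z
    have hsum : (∑ j, (|z j| ^ ((N:ℝ) / (s j:ℝ)) / τ) ^ ((s j:ℝ) / ((N:ℝ) - (s j:ℝ))))
        = Φ τ z := by
      rw [hΦdef]
      refine Finset.sum_congr rfl fun j _ => ?_
      rw [div_rpow (rpow_nonneg (abs_nonneg _) _) hτ.le, ← Real.rpow_mul (abs_nonneg _)]
      rw [hrq j]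
      congr 2
      rw [hrdef]
      rw [div_mul_div_comm, div_eq_div_iff (ne_of_gt (mul_pos (hsR j) (hNs j))) (hNs j).ne']
      ring
    rw [GK, hsum, ← hSdef]
  have hGKnn : ∀ (c ζ τ : ℝ), 0 < τ → ∀ z : Fin d → ℝ, 0 ≤ GK d N s c ζ τ z := by
    intro c ζ τ hτ z
    rw [hGK c ζ τ hτ z]
    positivity
  have hsub : ∀ {σ t : ℝ}, 0 < σ → σ < t → ∀ x y : Fin d → ℝ,
      Φ t x ≤ Φ (t - σ) (x - y) + Φ σ y := by
    intro σ t hσ hσt x y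
    have h1 : 0 < t - σ := by linarith
    rw [hΦdef, ← Finset.sum_add_distrib]
    refine Finset.sum_le_sum fun j _ => ?_
    have h := term_subadd_aux (hr1 j).le (x j - y j) (y j) h1 hσ
    rw [sub_add_cancel, sub_add_cancel] at h
    simpa [Pi.sub_apply] using h
  have hε : (0:ℝ) < c₂ - c₁ := by linarith
  set J : Fin d → ℝ := fun j => ∫ u : ℝ, exp (-|u| ^ r j) with hJdef
  set Cd : ℝ := ∏ j, ((c₂ - c₁) ^ (-(r j)⁻¹) * J j) with hCddef
  have hCd0 : 0 ≤ Cd := by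
    rw [hCddef]
    exact Finset.prod_nonneg fun j _ => mul_nonneg (rpow_nonneg hε.le _)
      (integral_nonneg fun u => (exp_pos _).le)
  have key1 : ∀ τ : ℝ, 0 < τ →
      Integrable (fun y : Fin d → ℝ => exp (-(c₂ - c₁) * Φ τ y)) ∧
      (∫ y : Fin d → ℝ, exp (-(c₂ - c₁) * Φ τ y)) = Cd * τ ^ (S / N) := by
    intro τ hτ
    have hb : ∀ j, 0 < (c₂ - c₁) / τ ^ (r j - 1) := fun j =>
      div_pos hε (rpow_pos_of_pos hτ _)
    have hprod : (fun y : Fin d → ℝ => exp (-(c₂ - c₁) * Φ τ y))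
        = fun y : Fin d → ℝ =>
          ∏ j, (fun u : ℝ => exp (-((c₂ - c₁) / τ ^ (r j - 1) * |u| ^ r j))) (y j) := by
      funext y
      rw [← Real.exp_sum, hΦdef]
      congr 1
      rw [Finset.mul_sum]
      refine Finset.sum_congr rfl fun j _ => ?_
      have hne : (τ : ℝ) ^ (r j - 1) ≠ 0 := (rpow_pos_of_pos hτ _).ne'
      field_simp
    have hintj : ∀ j, Integrable
        (fun u : ℝ => exp (-((c₂ - c₁) / τ ^ (r j - 1) * |u| ^ r j))) :=
      fun j => integrable_exp_neg_abs_rpow_aux (hb j) (hr1 j).le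
    constructor
    · rw [hprod]
      exact Integrable.fintype_prod fun j => hintj j
    · rw [hprod]
      beta_reduce
      rw [volume_pi, integral_fintype_prod_eq_prod
        (f := fun j (u : ℝ) => exp (-((c₂ - c₁) / τ ^ (r j - 1) * |u| ^ r j)))]
      have hco : ∀ j, (∫ u : ℝ, exp (-((c₂ - c₁) / τ ^ (r j - 1) * |u| ^ r j)))
          = ((c₂ - c₁) ^ (-(r j)⁻¹) * J j) * τ ^ ((s j : ℝ) / N) := by
        intro j
        rw [gauss_scale_aux (hb j) (hr1 j).le]
        have h1 : ((c₂ - c₁) / τ ^ (r j - 1)) ^ (-(r j)⁻¹)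
            = (c₂ - c₁) ^ (-(r j)⁻¹) * τ ^ ((s j : ℝ) / N) := by
          rw [div_rpow hε.le (rpow_pos_of_pos hτ _).le,
            ← Real.rpow_mul hτ.le]
          have hexp : (r j - 1) * (-(r j)⁻¹) = -((s j : ℝ) / N) := by
            rw [hrq j, hrdef]
            rw [inv_div]
            field_simp [(hNs j).ne', hN0.ne']
          rw [hexp, Real.rpow_neg hτ.le, div_eq_mul_inv, inv_inv]
        rw [h1, hJdef]
        ring
      rw [Finset.prod_congr rfl fun j _ => hco j, Finset.prod_mul_distrib,
        ← Real.rpow_sum_of_pos hτ, ← Finset.sum_div, ← hSdef, ← hCddef]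
  have key2 : ∀ (τ : ℝ), 0 < τ → ∀ x : Fin d → ℝ,
      Integrable (fun y : Fin d → ℝ => exp (-(c₂ - c₁) * Φ τ (x - y))) ∧
      (∫ y : Fin d → ℝ, exp (-(c₂ - c₁) * Φ τ (x - y))) = Cd * τ ^ (S / N) := by
    intro τ hτ x
    refine ⟨(key1 τ hτ).1.comp_sub_left x, ?_⟩
    rw [integral_sub_left_eq_self (fun y : Fin d → ℝ => exp (-(c₂ - c₁) * Φ τ y)) _ x]
    exact (key1 τ hτ).2
  have hβ1 : (-1:ℝ) < ζ₁ / N := by rw [lt_div_iff₀ hN0]; linarith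
  have hβ2 : (-1:ℝ) < ζ₂ / N := by rw [lt_div_iff₀ hN0]; linarith
  have hβ1p : (0:ℝ) < ζ₁ / N + 1 := by linarith
  have hβ2p : (0:ℝ) < ζ₂ / N + 1 := by linarith
  refine ⟨max (Cd * ((2:ℝ) ^ |(ζ₁ - S) / N| / (ζ₂ / N + 1) +
      (2:ℝ) ^ |(ζ₂ - S) / N| / (ζ₁ / N + 1))) 1, lt_max_of_lt_right one_pos, ?_⟩
  intro t ht x
  have half_bd : ∀ u α : ℝ, t / 2 ≤ u → u ≤ t → u ^ α ≤ (2:ℝ) ^ |α| * t ^ α := by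
    intro u α h1 h2
    have hu : 0 < u := lt_of_lt_of_le (by linarith) h1
    rcases le_or_gt 0 α with hα | hα
    · rw [abs_of_nonneg hα]
      calc u ^ α ≤ t ^ α := rpow_le_rpow hu.le h2 hα
        _ ≤ 2 ^ α * t ^ α :=
          le_mul_of_one_le_left (rpow_nonneg ht.le _) (Real.one_le_rpow one_le_two hα)
    · rw [abs_of_neg hα]
      calc u ^ α ≤ (t / 2) ^ α := rpow_le_rpow_of_nonpos (by linarith) h1 hα.le
        _ = 2 ^ (-α) * t ^ α := by
            rw [div_rpow ht.le (by norm_num : (0:ℝ) ≤ 2), Real.rpow_neg (by norm_num : (0:ℝ) ≤ 2)]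
            ring
  set E : ℝ := exp (-c₁ * Φ t x) with hEdef
  have hEnn : 0 ≤ E := (exp_pos _).le
  set A : ℝ := E * Cd * (2:ℝ) ^ |(ζ₁ - S) / N| * t ^ ((ζ₁ - S) / N) with hAdef
  set B : ℝ := E * Cd * (2:ℝ) ^ |(ζ₂ - S) / N| * t ^ ((ζ₂ - S) / N) with hBdef
  have hAnn : 0 ≤ A := by
    rw [hAdef]
    exact mul_nonneg (mul_nonneg (mul_nonneg hEnn hCd0) (rpow_nonneg (by norm_num) _))
      (rpow_nonneg ht.le _)
  have hBnn : 0 ≤ B := by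
    rw [hBdef]
    exact mul_nonneg (mul_nonneg (mul_nonneg hEnn hCd0) (rpow_nonneg (by norm_num) _))
      (rpow_nonneg ht.le _)
  -- pointwise-in-σ bound for the inner integral
  have hbd : ∀ σ ∈ Set.Ioo (0:ℝ) t,
      (∫ y : Fin d → ℝ, GK d N s c₂ ζ₁ (t - σ) (x - y) * GK d N s c₂ ζ₂ σ y)
        ≤ A * σ ^ (ζ₂ / N) + B * (t - σ) ^ (ζ₁ / N) := by
    intro σ hσ
    obtain ⟨hσ0, hσt⟩ := hσ
    have hts : 0 < t - σ := by linarith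
    have hGKGKnn : ∀ y : Fin d → ℝ,
        0 ≤ GK d N s c₂ ζ₁ (t - σ) (x - y) * GK d N s c₂ ζ₂ σ y := fun y =>
      mul_nonneg (hGKnn _ _ _ hts _) (hGKnn _ _ _ hσ0 _)
    have hexpkey : ∀ y : Fin d → ℝ, ∀ Ψ : ℝ, 0 ≤ Ψ →
        Ψ ≤ Φ (t - σ) (x - y) + Φ σ y →
        exp (-c₂ * Φ (t - σ) (x - y)) * exp (-c₂ * Φ σ y)
          ≤ exp (-c₁ * Φ t x) * exp (-(c₂ - c₁) * Ψ) := by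
      intro y Ψ hΨ0 hΨ
      have h1 := hsub hσ0 hσt x y
      have h2 := hΦnonneg _ (x - y) hts
      have h3 := hΦnonneg _ y hσ0
      rw [← Real.exp_add, ← Real.exp_add, Real.exp_le_exp]
      nlinarith [mul_le_mul_of_nonneg_left h1 hc₁.le, mul_le_mul_of_nonneg_left hΨ hε.le]
    have ptw1 : ∀ y : Fin d → ℝ,
        GK d N s c₂ ζ₁ (t - σ) (x - y) * GK d N s c₂ ζ₂ σ y
          ≤ ((t - σ) ^ ((ζ₁ - S) / N) * σ ^ ((ζ₂ - S) / N) * E) *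
              exp (-(c₂ - c₁) * Φ σ y) := by
      intro y
      rw [hGK c₂ ζ₁ (t - σ) hts, hGK c₂ ζ₂ σ hσ0]
      have hx := hexpkey y (Φ σ y) (hΦnonneg _ y hσ0)
        (le_add_of_nonneg_left (hΦnonneg _ (x - y) hts))
      calc (t - σ) ^ ((ζ₁ - S) / N) * exp (-c₂ * Φ (t - σ) (x - y)) *
            (σ ^ ((ζ₂ - S) / N) * exp (-c₂ * Φ σ y))
          = ((t - σ) ^ ((ζ₁ - S) / N) * σ ^ ((ζ₂ - S) / N)) *
              (exp (-c₂ * Φ (t - σ) (x - y)) * exp (-c₂ * Φ σ y)) := by ring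
        _ ≤ ((t - σ) ^ ((ζ₁ - S) / N) * σ ^ ((ζ₂ - S) / N)) *
              (exp (-c₁ * Φ t x) * exp (-(c₂ - c₁) * Φ σ y)) := by
            apply mul_le_mul_of_nonneg_left hx
            exact mul_nonneg (rpow_nonneg hts.le _) (rpow_nonneg hσ0.le _)
        _ = ((t - σ) ^ ((ζ₁ - S) / N) * σ ^ ((ζ₂ - S) / N) * E) *
              exp (-(c₂ - c₁) * Φ σ y) := by rw [hEdef]; ring
    have ptw2 : ∀ y : Fin d → ℝ,
        GK d N s c₂ ζ₁ (t - σ) (x - y) * GK d N s c₂ ζ₂ σ y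
          ≤ ((t - σ) ^ ((ζ₁ - S) / N) * σ ^ ((ζ₂ - S) / N) * E) *
              exp (-(c₂ - c₁) * Φ (t - σ) (x - y)) := by
      intro y
      rw [hGK c₂ ζ₁ (t - σ) hts, hGK c₂ ζ₂ σ hσ0]
      have hx := hexpkey y (Φ (t - σ) (x - y)) (hΦnonneg _ (x - y) hts)
        (le_add_of_nonneg_right (hΦnonneg _ y hσ0))
      calc (t - σ) ^ ((ζ₁ - S) / N) * exp (-c₂ * Φ (t - σ) (x - y)) *
            (σ ^ ((ζ₂ - S) / N) * exp (-c₂ * Φ σ y))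
          = ((t - σ) ^ ((ζ₁ - S) / N) * σ ^ ((ζ₂ - S) / N)) *
              (exp (-c₂ * Φ (t - σ) (x - y)) * exp (-c₂ * Φ σ y)) := by ring
        _ ≤ ((t - σ) ^ ((ζ₁ - S) / N) * σ ^ ((ζ₂ - S) / N)) *
              (exp (-c₁ * Φ t x) * exp (-(c₂ - c₁) * Φ (t - σ) (x - y))) := by
            apply mul_le_mul_of_nonneg_left hx
            exact mul_nonneg (rpow_nonneg hts.le _) (rpow_nonneg hσ0.le _)
        _ = ((t - σ) ^ ((ζ₁ - S) / N) * σ ^ ((ζ₂ - S) / N) * E) *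
              exp (-(c₂ - c₁) * Φ (t - σ) (x - y)) := by rw [hEdef]; ring
    have ibd1 : (∫ y : Fin d → ℝ, GK d N s c₂ ζ₁ (t - σ) (x - y) * GK d N s c₂ ζ₂ σ y)
        ≤ ((t - σ) ^ ((ζ₁ - S) / N) * σ ^ ((ζ₂ - S) / N) * E) * (Cd * σ ^ (S / N)) := by
      have hint := ((key1 σ hσ0).1.const_mul
        ((t - σ) ^ ((ζ₁ - S) / N) * σ ^ ((ζ₂ - S) / N) * E))
      have h := integral_mono_of_nonneg (ae_of_all _ hGKGKnn) hint (ae_of_all _ ptw1)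
      rwa [integral_const_mul, (key1 σ hσ0).2] at h
    have ibd2 : (∫ y : Fin d → ℝ, GK d N s c₂ ζ₁ (t - σ) (x - y) * GK d N s c₂ ζ₂ σ y)
        ≤ ((t - σ) ^ ((ζ₁ - S) / N) * σ ^ ((ζ₂ - S) / N) * E) * (Cd * (t - σ) ^ (S / N)) := by
      have hint := (((key2 (t - σ) hts x).1).const_mul
        ((t - σ) ^ ((ζ₁ - S) / N) * σ ^ ((ζ₂ - S) / N) * E))
      have h := integral_mono_of_nonneg (ae_of_all _ hGKGKnn) hint (ae_of_all _ ptw2)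
      rwa [integral_const_mul, (key2 (t - σ) hts x).2] at h
    rcases le_or_gt σ (t / 2) with hhalf | hhalf
    · refine ibd1.trans ?_
      have e1 : σ ^ ((ζ₂ - S) / N) * σ ^ (S / N) = σ ^ (ζ₂ / N) := by
        rw [← Real.rpow_add hσ0, ← add_div, sub_add_cancel]
      have e2 : (t - σ) ^ ((ζ₁ - S) / N) ≤ (2:ℝ) ^ |(ζ₁ - S) / N| * t ^ ((ζ₁ - S) / N) :=
        half_bd _ _ (by linarith) (by linarith)
      calc ((t - σ) ^ ((ζ₁ - S) / N) * σ ^ ((ζ₂ - S) / N) * E) * (Cd * σ ^ (S / N))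
          = ((t - σ) ^ ((ζ₁ - S) / N)) * (E * Cd * (σ ^ ((ζ₂ - S) / N) * σ ^ (S / N))) := by
            ring
        _ = ((t - σ) ^ ((ζ₁ - S) / N)) * (E * Cd * σ ^ (ζ₂ / N)) := by rw [e1]
        _ ≤ ((2:ℝ) ^ |(ζ₁ - S) / N| * t ^ ((ζ₁ - S) / N)) * (E * Cd * σ ^ (ζ₂ / N)) := by
            apply mul_le_mul_of_nonneg_right e2
            exact mul_nonneg (mul_nonneg hEnn hCd0) (rpow_nonneg hσ0.le _)
        _ = A * σ ^ (ζ₂ / N) := by rw [hAdef]; ring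
        _ ≤ A * σ ^ (ζ₂ / N) + B * (t - σ) ^ (ζ₁ / N) :=
            le_add_of_nonneg_right (mul_nonneg hBnn (rpow_nonneg hts.le _))
    · refine ibd2.trans ?_
      have e1 : (t - σ) ^ ((ζ₁ - S) / N) * (t - σ) ^ (S / N) = (t - σ) ^ (ζ₁ / N) := by
        rw [← Real.rpow_add hts, ← add_div, sub_add_cancel]
      have e2 : σ ^ ((ζ₂ - S) / N) ≤ (2:ℝ) ^ |(ζ₂ - S) / N| * t ^ ((ζ₂ - S) / N) :=
        half_bd _ _ (by linarith) (by linarith)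
      calc ((t - σ) ^ ((ζ₁ - S) / N) * σ ^ ((ζ₂ - S) / N) * E) * (Cd * (t - σ) ^ (S / N))
          = (σ ^ ((ζ₂ - S) / N)) * (E * Cd * ((t - σ) ^ ((ζ₁ - S) / N) * (t - σ) ^ (S / N))) := by
            ring
        _ = (σ ^ ((ζ₂ - S) / N)) * (E * Cd * (t - σ) ^ (ζ₁ / N)) := by rw [e1]
        _ ≤ ((2:ℝ) ^ |(ζ₂ - S) / N| * t ^ ((ζ₂ - S) / N)) * (E * Cd * (t - σ) ^ (ζ₁ / N)) := by
            apply mul_le_mul_of_nonneg_right e2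
            exact mul_nonneg (mul_nonneg hEnn hCd0) (rpow_nonneg hts.le _)
        _ = B * (t - σ) ^ (ζ₁ / N) := by rw [hBdef]; ring
        _ ≤ A * σ ^ (ζ₂ / N) + B * (t - σ) ^ (ζ₁ / N) :=
            le_add_of_nonneg_left (mul_nonneg hAnn (rpow_nonneg hσ0.le _))
  -- integrability on (0, t)
  have hi1 : IntegrableOn (fun σ : ℝ => σ ^ (ζ₂ / N)) (Set.Ioo 0 t) := by
    have h := intervalIntegral.intervalIntegrable_rpow' (a := 0) (b := t) hβ2
    rw [intervalIntegrable_iff, Set.uIoc_of_le ht.le] at h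
    exact h.mono_set Set.Ioo_subset_Ioc_self
  have hi2 : IntegrableOn (fun σ : ℝ => (t - σ) ^ (ζ₁ / N)) (Set.Ioo 0 t) := by
    have h := (intervalIntegral.intervalIntegrable_rpow' (a := 0) (b := t) hβ1).comp_sub_left t
    rw [sub_zero, sub_self] at h
    rw [intervalIntegrable_iff, Set.uIoc_comm, Set.uIoc_of_le ht.le] at h
    exact h.mono_set Set.Ioo_subset_Ioc_self
  have hgint : Integrable (fun σ : ℝ => A * σ ^ (ζ₂ / N) + B * (t - σ) ^ (ζ₁ / N))
      (volume.restrict (Set.Ioo 0 t)) := (hi1.const_mul A).add (hi2.const_mul B)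
  have hmono := integral_mono_of_nonneg (μ := volume.restrict (Set.Ioo 0 t))
    (f := fun σ => ∫ y : Fin d → ℝ, GK d N s c₂ ζ₁ (t - σ) (x - y) * GK d N s c₂ ζ₂ σ y)
    (g := fun σ => A * σ ^ (ζ₂ / N) + B * (t - σ) ^ (ζ₁ / N))
    ((ae_restrict_iff' measurableSet_Ioo).2 (ae_of_all _ fun σ hσ =>
      integral_nonneg fun y => mul_nonneg (hGKnn _ _ _ (by linarith [hσ.2] : 0 < t - σ) _)
        (hGKnn _ _ _ hσ.1 _)))
    hgint
    ((ae_restrict_iff' measurableSet_Ioo).2 (ae_of_all _ hbd))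
  -- compute the dominating integral
  have hval1 : ∫ σ in Set.Ioo (0:ℝ) t, σ ^ (ζ₂ / N) = t ^ (ζ₂ / N + 1) / (ζ₂ / N + 1) := by
    rw [← MeasureTheory.integral_Ioc_eq_integral_Ioo, ← intervalIntegral.integral_of_le ht.le,
      integral_rpow (Or.inl hβ2), Real.zero_rpow hβ2p.ne', sub_zero]
  have hval2 : ∫ σ in Set.Ioo (0:ℝ) t, (t - σ) ^ (ζ₁ / N) = t ^ (ζ₁ / N + 1) / (ζ₁ / N + 1) := by
    rw [← MeasureTheory.integral_Ioc_eq_integral_Ioo, ← intervalIntegral.integral_of_le ht.le,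
      intervalIntegral.integral_comp_sub_left (fun u : ℝ => u ^ (ζ₁ / N)) t, sub_self, sub_zero,
      integral_rpow (Or.inl hβ1), Real.zero_rpow hβ1p.ne', sub_zero]
  have ht1 : t ^ ((ζ₁ - S) / N) * t ^ (ζ₂ / N + 1) = t ^ ((ζ₁ + ζ₂ + N - S) / N) := by
    rw [← Real.rpow_add ht]
    congr 1
    field_simp
    ring
  have ht2 : t ^ ((ζ₂ - S) / N) * t ^ (ζ₁ / N + 1) = t ^ ((ζ₁ + ζ₂ + N - S) / N) := by
    rw [← Real.rpow_add ht]
    congr 1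
    field_simp
    ring
  have hGKfinal : GK d N s c₁ (ζ₁ + ζ₂ + N) t x = t ^ ((ζ₁ + ζ₂ + N - S) / N) * E := by
    rw [hGK c₁ (ζ₁ + ζ₂ + N) t ht x, hEdef]
  calc (∫ σ in Set.Ioo (0:ℝ) t, ∫ y : Fin d → ℝ,
          GK d N s c₂ ζ₁ (t - σ) (x - y) * GK d N s c₂ ζ₂ σ y)
      ≤ ∫ σ in Set.Ioo (0:ℝ) t, (A * σ ^ (ζ₂ / N) + B * (t - σ) ^ (ζ₁ / N)) := hmono
    _ = A * (t ^ (ζ₂ / N + 1) / (ζ₂ / N + 1)) + B * (t ^ (ζ₁ / N + 1) / (ζ₁ / N + 1)) := by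
        rw [integral_add (hi1.const_mul A) (hi2.const_mul B), integral_const_mul,
          integral_const_mul, hval1, hval2]
    _ = (Cd * ((2:ℝ) ^ |(ζ₁ - S) / N| / (ζ₂ / N + 1) +
          (2:ℝ) ^ |(ζ₂ - S) / N| / (ζ₁ / N + 1))) * GK d N s c₁ (ζ₁ + ζ₂ + N) t x := by
        have q1 : A * (t ^ (ζ₂ / N + 1) / (ζ₂ / N + 1))
            = Cd * ((2:ℝ) ^ |(ζ₁ - S) / N| / (ζ₂ / N + 1)) *
                (t ^ ((ζ₁ + ζ₂ + N - S) / N) * E) := by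
          rw [hAdef, ← ht1]; ring
        have q2 : B * (t ^ (ζ₁ / N + 1) / (ζ₁ / N + 1))
            = Cd * ((2:ℝ) ^ |(ζ₂ - S) / N| / (ζ₁ / N + 1)) *
                (t ^ ((ζ₁ + ζ₂ + N - S) / N) * E) := by
          rw [hBdef, ← ht2]; ring
        rw [hGKfinal, q1, q2]
        ring
    _ ≤ max (Cd * ((2:ℝ) ^ |(ζ₁ - S) / N| / (ζ₂ / N + 1) +
          (2:ℝ) ^ |(ζ₂ - S) / N| / (ζ₁ / N + 1))) 1 * GK d N s c₁ (ζ₁ + ζ₂ + N) t x :=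
        mul_le_mul_of_nonneg_right (le_max_left _ _) (hGKnn c₁ _ t ht x)
end

section
/- Let Γ = (Γ_t)_{t>0} be a family of continuous kernels on ℝ^d×ℝ^d such that for some constants C, γ, c > 0 and all t, s > 0, x, x', y ∈ ℝ^d and m ∈ ℤ^d: (i) Γ_{t+s}(x,y) = ∫_{ℝ^d} Γ_t(x,w) Γ_s(w,y) dw; (ii) |Γ_t(x,y)| ≤ C e^{γt} G_t^{(c,0)}(x−y); (iii) |Γ_t(x,y) − Γ_t(x',y)| ≤ C e^{γt} ‖x−x'‖_𝔰 (G_t^{(c,−1)}(x−y) + G_t^{(c,−1)}(x'−y)); (iv) |∫_{ℝ^d} Γ_t(x,y) dy − 1| ≤ C e^{γt} t^{1/N}; (v) Γ_t(x+m, y+m) = Γ_t(x,y). For a bounded continuous f : ℝ^d → ℝ and β < 0 set ‖f‖_{𝒞^β(Γ)} := sup_{0 < t ≤ 1} t^{−β/N} sup_{x ∈ ℝ^d} |∫_{ℝ^d} Γ_t(x,y) f(y) dy|. Then for any β' < β < 0, every sequence (f_n) of bounded continuous ℤ^d-periodic functions with sup_n ‖f_n‖_{𝒞^β(Γ)} <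 ∞ admits a subsequence that is Cauchy with respect to ‖·‖_{𝒞^{β'}(Γ)}; in other words the embedding 𝒞_𝔰^β(Γ) ⊂ 𝒞_𝔰^{β'}(Γ) is compact on periodic functions. -/
set_option maxHeartbeats 1000000


open MeasureTheory Real Filter Topology

/-- Anisotropic norm `‖x‖_𝔰 = Σ_j |x_j|^{1/𝔰_j}`. -/
noncomputable def sNorm (d : ℕ) (s : Fin d → ℕ) (x : Fin d → ℝ) : ℝ :=
  ∑ j, |x j| ^ ((1 : ℝ) / (s j : ℝ))

lemma integrable_exp_neg_abs_rpow {b p : ℝ} (hb : 0 < b) (hp : 1 ≤ p) :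
    Integrable fun x : ℝ => Real.exp (-b * |x| ^ p) := by
  have hIoi : IntegrableOn (fun x : ℝ => Real.exp (-b * |x| ^ p)) (Set.Ioi 0) := by
    have h := integrableOn_rpow_mul_exp_neg_mul_rpow (s := 0) (p := p) (b := b)
      (by norm_num) (by linarith) hb
    refine (h.congr_fun (fun x hx => ?_) measurableSet_Ioi)
    dsimp only
    rw [Real.rpow_zero, one_mul, abs_of_pos (Set.mem_Ioi.mp hx)]
  rw [← integrableOn_univ, ← Set.Iio_union_Ici (a := (0:ℝ)), integrableOn_union,
    integrableOn_Ici_iff_integrableOn_Ioi]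
  refine ⟨?_, hIoi⟩
  rw [← Measure.map_neg_eq_self (volume : Measure ℝ)]
  have m : MeasurableEmbedding fun x : ℝ => -x := (Homeomorph.neg ℝ).measurableEmbedding
  rw [m.integrableOn_map_iff]
  simp only [Function.comp_def, abs_neg, Set.neg_preimage, Set.neg_Iio, neg_zero]
  exact hIoi

section GKfacts

variable {d N : ℕ} {s : Fin d → ℕ} {c ζ t : ℝ}

lemma GK_prod (hs : ∀ j, 0 < s j) (hN : ∀ j, s j < N) (ht : 0 < t) (x : Fin d → ℝ) :
    GK d N s c ζ t x = t ^ ((ζ - ∑ j, (s j : ℝ)) / (N : ℝ)) *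
      ∏ j, Real.exp (-(c / t ^ ((s j : ℝ) / ((N : ℝ) - (s j : ℝ)))) *
        |x j| ^ ((N : ℝ) / ((N : ℝ) - (s j : ℝ)))) := by
  unfold GK
  congr 1
  rw [← Real.exp_sum]
  congr 1
  rw [Finset.mul_sum]
  congr 1
  funext j
  have hsj : (0:ℝ) < (s j : ℝ) := by exact_mod_cast hs j
  have hNs : (0:ℝ) < (N : ℝ) - (s j : ℝ) := by
    have := hN j; have : (s j : ℝ) < (N : ℝ) := by exact_mod_cast this
    linarith
  rw [Real.div_rpow (Real.rpow_nonneg (abs_nonneg _) _) ht.le,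
    ← Real.rpow_mul (abs_nonneg _)]
  have : (N : ℝ) / (s j : ℝ) * ((s j : ℝ) / ((N : ℝ) - (s j : ℝ)))
      = (N : ℝ) / ((N : ℝ) - (s j : ℝ)) := by
    field_simp
  rw [this]
  ring

lemma GK_integrable (hs : ∀ j, 0 < s j) (hN : ∀ j, s j < N) (hc : 0 < c) (ht : 0 < t) : Integrable (GK d N s c ζ t) := by
  have : GK d N s c ζ t = fun x => t ^ ((ζ - ∑ j, (s j : ℝ)) / (N : ℝ)) *
      ∏ j, Real.exp (-(c / t ^ ((s j : ℝ) / ((N : ℝ) - (s j : ℝ)))) *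
        |x j| ^ ((N : ℝ) / ((N : ℝ) - (s j : ℝ)))) := funext fun x => GK_prod hs hN ht x
  rw [this]
  refine Integrable.const_mul ?_ _
  refine Integrable.fintype_prod (f := fun j (y : ℝ) =>
    Real.exp (-(c / t ^ ((s j : ℝ) / ((N : ℝ) - (s j : ℝ)))) *
      |y| ^ ((N : ℝ) / ((N : ℝ) - (s j : ℝ))))) (fun j => ?_)
  have hsj : (0:ℝ) < (s j : ℝ) := by exact_mod_cast hs j
  have hNs : (0:ℝ) < (N : ℝ) - (s j : ℝ) := by
    have : (s j : ℝ) < (N : ℝ) := by exact_mod_cast hN j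
    linarith
  refine integrable_exp_neg_abs_rpow (div_pos hc (Real.rpow_pos_of_pos ht _)) ?_
  rw [le_div_iff₀ hNs]
  linarith

end GKfacts


lemma integral_exp_neg_abs_rpow_scale {c t psj qj sjN : ℝ} (hc : 0 < c) (ht : 0 < t)
    (hE : -(sjN) * qj = -psj) :
    ∫ y : ℝ, Real.exp (-(c / t ^ psj) * |y| ^ qj)
      = t ^ sjN * ∫ w : ℝ, Real.exp (-c * |w| ^ qj) := by
  have ha : 0 < t ^ (-(sjN)) := Real.rpow_pos_of_pos ht _
  have claim1 : ∀ y : ℝ, Real.exp (-(c / t ^ psj) * |y| ^ qj)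
      = (fun w : ℝ => Real.exp (-c * |w| ^ qj)) ((t ^ (-(sjN))) • y) := by
    intro y
    simp only [smul_eq_mul]
    rw [abs_mul, abs_of_pos ha, Real.mul_rpow ha.le (abs_nonneg _),
      ← Real.rpow_mul ht.le (-sjN) qj, hE, Real.rpow_neg ht.le, div_eq_mul_inv]
    ring_nf
  rw [funext claim1]
  rw [MeasureTheory.Measure.integral_comp_smul (volume : Measure ℝ)
      (fun w : ℝ => Real.exp (-c * |w| ^ qj)) (t ^ (-(sjN)))]
  rw [Module.finrank_self, pow_one, ← Real.rpow_neg ht.le, neg_neg,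
    abs_of_pos (Real.rpow_pos_of_pos ht _), smul_eq_mul]

lemma GK_integral {d N : ℕ} {s : Fin d → ℕ} {c ζ t : ℝ}
    (hs : ∀ j, 0 < s j) (hN : ∀ j, s j < N) (hN0 : 0 < N) (hc : 0 < c) (ht : 0 < t) :
    ∫ x : Fin d → ℝ, GK d N s c ζ t x
      = t ^ (ζ / (N : ℝ)) *
        ∏ j, ∫ y : ℝ, Real.exp (-c * |y| ^ ((N : ℝ) / ((N : ℝ) - (s j : ℝ)))) := by
  have hNR : (0:ℝ) < (N:ℝ) := by exact_mod_cast hN0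
  simp_rw [GK_prod hs hN ht, MeasureTheory.integral_const_mul]
  rw [MeasureTheory.integral_fintype_prod_volume_eq_prod (f := fun j (y : ℝ) =>
    Real.exp (-(c / t ^ ((s j : ℝ) / ((N : ℝ) - (s j : ℝ)))) *
      |y| ^ ((N : ℝ) / ((N : ℝ) - (s j : ℝ)))))]
  have key : ∀ j, ∫ y : ℝ, Real.exp (-(c / t ^ ((s j : ℝ) / ((N : ℝ) - (s j : ℝ)))) *
      |y| ^ ((N : ℝ) / ((N : ℝ) - (s j : ℝ))))
      = t ^ ((s j : ℝ) / (N : ℝ)) *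
        ∫ w : ℝ, Real.exp (-c * |w| ^ ((N : ℝ) / ((N : ℝ) - (s j : ℝ)))) := by
    intro j
    have hsj : (0:ℝ) < (s j : ℝ) := by exact_mod_cast hs j
    have hNs : (0:ℝ) < (N : ℝ) - (s j : ℝ) := by
      have : (s j : ℝ) < (N : ℝ) := by exact_mod_cast hN j
      linarith
    refine integral_exp_neg_abs_rpow_scale hc ht ?_
    field_simp
  simp_rw [key]
  rw [Finset.prod_mul_distrib, ← Real.rpow_sum_of_pos ht, ← Finset.sum_div, ← mul_assoc,
    ← Real.rpow_add ht]
  congr 2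
  ring

lemma sNorm_nonneg {d : ℕ} {s : Fin d → ℕ} (x : Fin d → ℝ) : 0 ≤ sNorm d s x :=
  Finset.sum_nonneg fun j _ => Real.rpow_nonneg (abs_nonneg _) _

lemma sNorm_zero {d : ℕ} {s : Fin d → ℕ} (hs : ∀ j, 0 < s j) : sNorm d s 0 = 0 := by
  unfold sNorm
  refine Finset.sum_eq_zero fun j _ => ?_
  have : (0:ℝ) < 1 / (s j : ℝ) := by
    have : (0:ℝ) < (s j : ℝ) := by exact_mod_cast hs j
    positivity
  rw [Pi.zero_apply, abs_zero, Real.zero_rpow this.ne']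

lemma continuous_sNorm {d : ℕ} {s : Fin d → ℕ} : Continuous (sNorm d s) := by
  unfold sNorm
  exact continuous_finset_sum _ fun j _ =>
    ((continuous_apply j).abs).rpow_const (fun x => Or.inr (by positivity))

lemma continuous_of_sNorm_lip {d : ℕ} {s : Fin d → ℕ} (hs : ∀ j, 0 < s j)
    {F : (Fin d → ℝ) → ℝ} {K : ℝ} (h : ∀ x x', |F x - F x'| ≤ K * sNorm d s (x - x')) :
    Continuous F := by
  rw [continuous_iff_continuousAt]
  intro x₀
  rw [ContinuousAt, tendsto_iff_dist_tendsto_zero]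
  refine squeeze_zero (g := fun x => K * sNorm d s (x - x₀)) (fun x => dist_nonneg)
    (fun x => by rw [Real.dist_eq]; exact h x x₀) ?_
  have hcont : Continuous fun x => K * sNorm d s (x - x₀) :=
    continuous_const.mul (continuous_sNorm.comp (continuous_id.sub continuous_const))
  have := hcont.tendsto x₀
  simpa [sub_self, sNorm_zero hs] using this

/-- Compactness of the embedding `𝒞_𝔰^β(Γ) ⊂ 𝒞_𝔰^{β'}(Γ)` on periodic functions, for a
semigroup `(Γ_t)` of kernels with Gaussian bounds, Lipschitz estimates, almost-unit mass and
`ℤ^d`-periodicity: every sequence of bounded continuous periodic functions bounded in the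
`𝒞^β(Γ)`-norm admits a subsequence which is Cauchy in the `𝒞^{β'}(Γ)`-norm. -/
theorem stmt9 (d N : ℕ) (hd : 0 < d) (s : Fin d → ℕ)
    (hs : ∀ j, 0 < s j) (hN : ∀ j, s j < N)
    (Γk : ℝ → (Fin d → ℝ) → (Fin d → ℝ) → ℝ)
    (hcont : ∀ t > (0:ℝ), Continuous fun p : (Fin d → ℝ) × (Fin d → ℝ) => Γk t p.1 p.2)
    (C γ c : ℝ) (hC : 0 < C) (hγ : 0 < γ) (hc : 0 < c)
    -- (i) semigroup property
    (hsemi : ∀ t > (0:ℝ), ∀ u > (0:ℝ), ∀ x y : Fin d → ℝ,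
      Γk (t + u) x y = ∫ w : Fin d → ℝ, Γk t x w * Γk u w y)
    -- (ii) Gaussian bound
    (hbd : ∀ t > (0:ℝ), ∀ x y : Fin d → ℝ,
      |Γk t x y| ≤ C * Real.exp (γ * t) * GK d N s c 0 t (x - y))
    -- (iii) Lipschitz estimate in the first variable
    (hLip : ∀ t > (0:ℝ), ∀ x x' y : Fin d → ℝ,
      |Γk t x y - Γk t x' y| ≤ C * Real.exp (γ * t) * sNorm d s (x - x') *
        (GK d N s c (-1) t (x - y) + GK d N s c (-1) t (x' - y)))
    -- (iv) almost-unit mass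
    (hmass : ∀ t > (0:ℝ), ∀ x : Fin d → ℝ,
      |(∫ y : Fin d → ℝ, Γk t x y) - 1| ≤ C * Real.exp (γ * t) * t ^ ((1 : ℝ) / N))
    -- (v) periodicity
    (hper : ∀ t > (0:ℝ), ∀ x y : Fin d → ℝ, ∀ m : Fin d → ℤ,
      Γk t (x + fun j => (m j : ℝ)) (y + fun j => (m j : ℝ)) = Γk t x y)
    (β β' : ℝ) (hβ : β < 0) (hβ' : β' < β)
    (f : ℕ → (Fin d → ℝ) → ℝ)
    (hfc : ∀ n, Continuous (f n)) (hfb : ∀ n, ∃ M, ∀ x, |f n x| ≤ M)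
    (hfper : ∀ n, ∀ x : Fin d → ℝ, ∀ m : Fin d → ℤ,
      f n (x + fun j => (m j : ℝ)) = f n x)
    (M : ℝ)
    (hM : ∀ n, ∀ t : ℝ, 0 < t → t ≤ 1 → ∀ x : Fin d → ℝ,
      |∫ y : Fin d → ℝ, Γk t x y * f n y| ≤ M * t ^ (β / N)) :
    ∃ φ : ℕ → ℕ, StrictMono φ ∧
      ∀ ε > (0:ℝ), ∃ K : ℕ, ∀ m ≥ K, ∀ n ≥ K, ∀ t : ℝ, 0 < t → t ≤ 1 →
        ∀ x : Fin d → ℝ,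
          |∫ y : Fin d → ℝ, Γk t x y * (f (φ m) y - f (φ n) y)| ≤ ε * t ^ (β' / N) := by
  have hN0 : 0 < N := (hs ⟨0, hd⟩).trans (hN ⟨0, hd⟩)
  have hNR : (0:ℝ) < (N:ℝ) := by exact_mod_cast hN0
  set CG := ∏ j, ∫ y : ℝ, Real.exp (-c * |y| ^ ((N:ℝ)/((N:ℝ) - (s j:ℝ)))) with hCGdef
  have hCG : 0 ≤ CG :=
    Finset.prod_nonneg fun j _ => integral_nonneg fun y => (Real.exp_pos _).le
  set K0 : ℝ := C * Real.exp γ * CG with hK0def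
  have hK0 : 0 ≤ K0 := by positivity
  have hM0 : 0 ≤ M := by
    have h := hM 0 1 one_pos le_rfl 0
    rw [Real.one_rpow, mul_one] at h
    exact (abs_nonneg _).trans h
  -- GK facts
  have hGint : ∀ ζ t : ℝ, 0 < t → Integrable (GK d N s c ζ t) :=
    fun ζ t ht => GK_integrable hs hN hc ht
  have hGsint : ∀ ζ t : ℝ, 0 < t → ∀ x : Fin d → ℝ,
      Integrable fun y => GK d N s c ζ t (x - y) :=
    fun ζ t ht x => (hGint ζ t ht).comp_sub_left x
  have hGsval : ∀ ζ t : ℝ, 0 < t → ∀ x : Fin d → ℝ,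
      (∫ y : Fin d → ℝ, GK d N s c ζ t (x - y)) = t ^ (ζ/(N:ℝ)) * CG := by
    intro ζ t ht x
    rw [integral_sub_left_eq_self (GK d N s c ζ t) volume x]
    exact GK_integral hs hN hN0 hc ht
  have hGnn : ∀ ζ t : ℝ, 0 < t → ∀ z : Fin d → ℝ, 0 ≤ GK d N s c ζ t z :=
    fun ζ t ht z => mul_nonneg (Real.rpow_pos_of_pos ht _).le (Real.exp_pos _).le
  -- Γ facts
  have hmeasΓ : ∀ t : ℝ, 0 < t → ∀ x : Fin d → ℝ,
      AEStronglyMeasurable (fun y => Γk t x y) volume :=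
    fun t ht x => ((hcont t ht).comp (continuous_const.prodMk continuous_id)).aestronglyMeasurable
  have hΓint : ∀ t : ℝ, 0 < t → ∀ x : Fin d → ℝ, Integrable fun y => Γk t x y := by
    intro t ht x
    refine Integrable.mono' ((hGsint 0 t ht x).const_mul (C * Real.exp (γ*t)))
      (hmeasΓ t ht x) (ae_of_all _ fun y => ?_)
    rw [Real.norm_eq_abs]
    exact hbd t ht x y
  have hmul : ∀ t : ℝ, 0 < t → ∀ x : Fin d → ℝ, ∀ g : (Fin d → ℝ) → ℝ, ∀ B : ℝ,
      AEStronglyMeasurable g volume → (∀ y, |g y| ≤ B) →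
      Integrable fun y => Γk t x y * g y := by
    intro t ht x g B hg hB
    refine ((hΓint t ht x).bdd_mul (c := B) hg (ae_of_all _ fun y => ?_)).congr (ae_of_all _ fun y => mul_comm _ _)
    rw [Real.norm_eq_abs]; exact hB y
  have hfint : ∀ n : ℕ, ∀ t : ℝ, 0 < t → ∀ x : Fin d → ℝ,
      Integrable fun y => Γk t x y * f n y := by
    intro n t ht x
    obtain ⟨Mn, hMn⟩ := hfb n
    exact hmul t ht x (f n) Mn (hfc n).aestronglyMeasurable hMn
  have habs : ∀ t : ℝ, 0 < t → t ≤ 1 → ∀ x : Fin d → ℝ,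
      (∫ y : Fin d → ℝ, |Γk t x y|) ≤ K0 := by
    intro t ht ht1 x
    have h1 : (∫ y : Fin d → ℝ, |Γk t x y|)
        ≤ ∫ y : Fin d → ℝ, C * Real.exp (γ*t) * GK d N s c 0 t (x - y) :=
      integral_mono (hΓint t ht x).abs ((hGsint 0 t ht x).const_mul _) fun y => hbd t ht x y
    rw [integral_const_mul, hGsval 0 t ht x, zero_div, Real.rpow_zero, one_mul] at h1
    refine h1.trans ?_
    rw [hK0def]
    have : Real.exp (γ * t) ≤ Real.exp γ := by
      apply Real.exp_le_exp.mpr; nlinarith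
    nlinarith [Real.exp_pos (γ*t), Real.exp_pos γ]
  have Hdiff : ∀ t : ℝ, 0 < t → ∀ x x' : Fin d → ℝ, ∀ g : (Fin d → ℝ) → ℝ, ∀ B : ℝ,
      0 ≤ B → AEStronglyMeasurable g volume → (∀ y, |g y| ≤ B) →
      |∫ y : Fin d → ℝ, (Γk t x y - Γk t x' y) * g y|
        ≤ (C * Real.exp (γ*t) * B * (2 * t ^ ((-1:ℝ)/(N:ℝ)) * CG)) * sNorm d s (x - x') := by
    intro t ht x x' g B hB0 hg hB
    have hsn : 0 ≤ sNorm d s (x - x') := sNorm_nonneg _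
    have hint : Integrable fun y => (Γk t x y - Γk t x' y) * g y := by
      have := (hmul t ht x g B hg hB).sub (hmul t ht x' g B hg hB)
      simpa [sub_mul, Pi.sub_def] using this
    have hbint : Integrable (fun y => (C * Real.exp (γ*t) * sNorm d s (x-x') * B) *
        (GK d N s c (-1) t (x-y) + GK d N s c (-1) t (x'-y))) :=
      ((hGsint (-1) t ht x).add (hGsint (-1) t ht x')).const_mul _
    have hpt : ∀ y, |(Γk t x y - Γk t x' y) * g y|
        ≤ (C * Real.exp (γ*t) * sNorm d s (x-x') * B) *
          (GK d N s c (-1) t (x-y) + GK d N s c (-1) t (x'-y)) := by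
      intro y
      rw [abs_mul]
      have hGKnn : 0 ≤ GK d N s c (-1) t (x-y) + GK d N s c (-1) t (x'-y) :=
        add_nonneg (hGnn _ t ht _) (hGnn _ t ht _)
      have hfac : 0 ≤ C * Real.exp (γ * t) * sNorm d s (x - x') *
          (GK d N s c (-1) t (x-y) + GK d N s c (-1) t (x'-y)) :=
        mul_nonneg (mul_nonneg (mul_nonneg hC.le (Real.exp_pos _).le) hsn) hGKnn
      calc |Γk t x y - Γk t x' y| * |g y|
          ≤ (C * Real.exp (γ*t) * sNorm d s (x-x') *
              (GK d N s c (-1) t (x-y) + GK d N s c (-1) t (x'-y))) * B :=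
            mul_le_mul (hLip t ht x x' y) (hB y) (abs_nonneg _) hfac
        _ = (C * Real.exp (γ*t) * sNorm d s (x-x') * B) *
              (GK d N s c (-1) t (x-y) + GK d N s c (-1) t (x'-y)) := by ring
    calc |∫ y : Fin d → ℝ, (Γk t x y - Γk t x' y) * g y|
        ≤ ∫ y : Fin d → ℝ, |(Γk t x y - Γk t x' y) * g y| := by
          have hni := norm_integral_le_integral_norm (μ := volume)
            (fun y => (Γk t x y - Γk t x' y) * g y)
          simp only [Real.norm_eq_abs] at hni
          exact hni
      _ ≤ ∫ y : Fin d → ℝ, (C * Real.exp (γ*t) * sNorm d s (x-x') * B) *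
            (GK d N s c (-1) t (x-y) + GK d N s c (-1) t (x'-y)) :=
          integral_mono hint.abs hbint hpt
      _ = (C * Real.exp (γ*t) * sNorm d s (x-x') * B) *
            ((t ^ ((-1:ℝ)/(N:ℝ)) * CG) + (t ^ ((-1:ℝ)/(N:ℝ)) * CG)) := by
          rw [integral_const_mul, integral_add (hGsint (-1) t ht x) (hGsint (-1) t ht x'),
            hGsval (-1) t ht x, hGsval (-1) t ht x']
      _ = (C * Real.exp (γ*t) * B * (2 * t ^ ((-1:ℝ)/(N:ℝ)) * CG)) * sNorm d s (x - x') := by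
          ring
  -- v facts
  have hvper : ∀ n : ℕ, ∀ t : ℝ, 0 < t → ∀ z : Fin d → ℝ, ∀ m : Fin d → ℤ,
      (∫ y : Fin d → ℝ, Γk t (z + fun j => (m j : ℝ)) y * f n y)
        = ∫ y : Fin d → ℝ, Γk t z y * f n y := by
    intro n t ht z m
    have key := integral_add_right_eq_self (μ := volume)
      (fun y => Γk t (z + fun j => (m j : ℝ)) y * f n y) (fun j => (m j : ℝ))
    rw [← key]
    congr 1
    funext y
    rw [hper t ht z y m, hfper n y m]
  have hred : ∀ t : ℝ, 0 < t → ∀ x : Fin d → ℝ, ∃ z : Fin d → ℝ,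
      z ∈ Set.Icc (0 : Fin d → ℝ) 1 ∧ ∀ n : ℕ,
      (∫ y : Fin d → ℝ, Γk t x y * f n y) = ∫ y : Fin d → ℝ, Γk t z y * f n y := by
    intro t ht x
    refine ⟨fun j => Int.fract (x j), ?_, ?_⟩
    · simp only [Set.mem_Icc, Pi.le_def]
      constructor
      · intro j; simpa using Int.fract_nonneg (x j)
      · intro j; simpa using (Int.fract_lt_one (x j)).le
    · intro n
      have hx : x = (fun j => Int.fract (x j)) + fun j => ((⌊x j⌋ : ℤ) : ℝ) := by
        funext j
        simp only [Pi.add_apply, Int.fract]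
        ring
      conv_lhs => rw [hx]
      exact hvper n t ht _ _
  have hvcont : ∀ n : ℕ, ∀ t : ℝ, 0 < t →
      Continuous fun x => ∫ y : Fin d → ℝ, Γk t x y * f n y := by
    intro n t ht
    obtain ⟨Mn, hMn⟩ := hfb n
    have hMn0 : 0 ≤ Mn := (abs_nonneg _).trans (hMn 0)
    apply continuous_of_sNorm_lip hs
      (K := C * Real.exp (γ*t) * Mn * (2 * t ^ ((-1:ℝ)/(N:ℝ)) * CG))
    intro x x'
    rw [← integral_sub (hfint n t ht x) (hfint n t ht x')]
    simp_rw [← sub_mul]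
    exact Hdiff t ht x x' (f n) Mn hMn0 (hfc n).aestronglyMeasurable hMn
  have P5 : ∀ n : ℕ, ∀ a b : ℝ, 0 < a → 0 < b → ∀ x : Fin d → ℝ,
      (∫ y : Fin d → ℝ, Γk (a+b) x y * f n y)
        = ∫ w : Fin d → ℝ, Γk a x w * ∫ y : Fin d → ℝ, Γk b w y * f n y := by
    intro n a b ha hb x
    obtain ⟨Mn, hMn⟩ := hfb n
    have hMn0 : 0 ≤ Mn := (abs_nonneg _).trans (hMn 0)
    have hGcont : Continuous
        (Function.uncurry fun (w y : Fin d → ℝ) => Γk a x w * (Γk b w y * f n y)) := by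
      have h1 : Continuous fun p : (Fin d → ℝ) × (Fin d → ℝ) => Γk a x p.1 :=
        (hcont a ha).comp (continuous_const.prodMk continuous_fst)
      have h3 : Continuous fun p : (Fin d → ℝ) × (Fin d → ℝ) => f n p.2 :=
        (hfc n).comp continuous_snd
      exact h1.mul ((hcont b hb).mul h3)
    have hintb : ∀ w, Integrable fun y => Γk a x w * (Γk b w y * f n y) :=
      fun w => (hfint n b hb w).const_mul _
    have huncur : Integrable
        (Function.uncurry fun (w y : Fin d → ℝ) => Γk a x w * (Γk b w y * f n y))
        (volume.prod volume) := by
      rw [integrable_prod_iff hGcont.aestronglyMeasurable]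
      constructor
      · exact ae_of_all _ fun w => hintb w
      · have hball : ∀ w, (∫ y : Fin d → ℝ, ‖Γk a x w * (Γk b w y * f n y)‖)
            ≤ |Γk a x w| * (C * Real.exp (γ*b) * Mn * CG) := by
          intro w
          have hI1 : Integrable fun y => ‖Γk a x w * (Γk b w y * f n y)‖ := (hintb w).norm
          have hI2 : Integrable fun y => |Γk a x w| *
              ((C * Real.exp (γ*b) * Mn) * GK d N s c 0 b (w - y)) :=
            ((hGsint 0 b hb w).const_mul _).const_mul _
          have hle : ∀ y, ‖Γk a x w * (Γk b w y * f n y)‖ ≤ |Γk a x w| *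
              ((C * Real.exp (γ*b) * Mn) * GK d N s c 0 b (w - y)) := by
            intro y
            rw [Real.norm_eq_abs, abs_mul, abs_mul]
            refine mul_le_mul_of_nonneg_left ?_ (abs_nonneg _)
            calc |Γk b w y| * |f n y|
                ≤ (C * Real.exp (γ*b) * GK d N s c 0 b (w-y)) * Mn :=
                  mul_le_mul (hbd b hb w y) (hMn y) (abs_nonneg _)
                    (mul_nonneg (mul_nonneg hC.le (Real.exp_pos _).le) (hGnn 0 b hb _))
              _ = (C * Real.exp (γ*b) * Mn) * GK d N s c 0 b (w - y) := by ring
          calc (∫ y : Fin d → ℝ, ‖Γk a x w * (Γk b w y * f n y)‖)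
              ≤ ∫ y : Fin d → ℝ, |Γk a x w| *
                  ((C*Real.exp (γ*b)*Mn) * GK d N s c 0 b (w - y)) :=
                integral_mono hI1 hI2 hle
            _ = |Γk a x w| * ((C*Real.exp (γ*b)*Mn) * (b ^ ((0:ℝ)/(N:ℝ)) * CG)) := by
                rw [integral_const_mul, integral_const_mul, hGsval 0 b hb w]
            _ = |Γk a x w| * (C * Real.exp (γ*b) * Mn * CG) := by
                rw [zero_div, Real.rpow_zero]; ring
        refine Integrable.mono'
          ((hΓint a ha x).abs.mul_const (C * Real.exp (γ*b) * Mn * CG))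
          hGcont.aestronglyMeasurable.norm.integral_prod_right'
          (ae_of_all _ fun w => ?_)
        rw [Real.norm_eq_abs, abs_of_nonneg (integral_nonneg fun y => norm_nonneg _)]
        exact hball w
    calc (∫ y : Fin d → ℝ, Γk (a+b) x y * f n y)
        = ∫ y : Fin d → ℝ, (∫ w : Fin d → ℝ, Γk a x w * Γk b w y) * f n y := by
          congr 1; funext y; rw [hsemi a ha b hb x y]
      _ = ∫ y : Fin d → ℝ, ∫ w : Fin d → ℝ, Γk a x w * (Γk b w y * f n y) := by
          congr 1; funext y
          rw [← integral_mul_const]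
          congr 1; funext w; ring
      _ = ∫ w : Fin d → ℝ, ∫ y : Fin d → ℝ, Γk a x w * (Γk b w y * f n y) :=
          (integral_integral_swap huncur).symm
      _ = ∫ w : Fin d → ℝ, Γk a x w * ∫ y : Fin d → ℝ, Γk b w y * f n y := by
          congr 1; funext w; rw [integral_const_mul]
  have P6b : ∀ n : ℕ, ∀ u : ℝ, 0 < u → u ≤ 1 → ∀ x x' : Fin d → ℝ,
      |(∫ y : Fin d → ℝ, Γk (u+u) x y * f n y) - ∫ y : Fin d → ℝ, Γk (u+u) x' y * f n y|
        ≤ (C * Real.exp (γ*u) * (M * u ^ (β/(N:ℝ))) * (2 * u ^ ((-1:ℝ)/(N:ℝ)) * CG))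
            * sNorm d s (x - x') := by
    intro n u hu hu1 x x'
    have hB0 : 0 ≤ M * u ^ (β/(N:ℝ)) :=
      mul_nonneg hM0 (Real.rpow_pos_of_pos hu _).le
    rw [P5 n u u hu hu x, P5 n u u hu hu x',
      ← integral_sub (hmul u hu x _ _ (hvcont n u hu).aestronglyMeasurable
          (fun w => hM n u hu hu1 w))
        (hmul u hu x' _ _ (hvcont n u hu).aestronglyMeasurable (fun w => hM n u hu hu1 w))]
    simp_rw [← sub_mul]
    exact Hdiff u hu x x' _ _ hB0 (hvcont n u hu).aestronglyMeasurable
      (fun w => hM n u hu hu1 w)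
  -- subsequence extraction
  have hdense : DenseRange (TopologicalSpace.denseSeq (Fin d → ℝ)) :=
    TopologicalSpace.denseRange_denseSeq _
  set e : ℕ → Fin d → ℝ := TopologicalSpace.denseSeq (Fin d → ℝ) with hedef
  set uk : ℕ → ℝ := fun k => (1/2 : ℝ)^k with hukdef
  have hukpos : ∀ k, 0 < uk k := fun k => pow_pos (by norm_num) k
  have huk1 : ∀ k, uk k ≤ 1 := fun k => pow_le_one₀ (by norm_num) (by norm_num)
  have huksplit : ∀ k, uk (k+1) = uk (k+2) + uk (k+2) := by
    intro k; simp only [hukdef]; ring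
  set a : ℕ → (ℕ × ℕ) → ℝ :=
    fun n p => ∫ y : Fin d → ℝ, Γk (uk p.1) (e p.2) y * f n y with hadef
  have hmem : ∀ n, a n ∈ Set.univ.pi fun p : ℕ × ℕ =>
      Set.Icc (-(M * (uk p.1) ^ (β/(N:ℝ)))) (M * (uk p.1) ^ (β/(N:ℝ))) := by
    intro n
    rw [Set.mem_univ_pi]
    intro p
    have h := hM n (uk p.1) (hukpos p.1) (huk1 p.1) (e p.2)
    exact abs_le.mp h
  obtain ⟨b, -, φ, hφ, hconv⟩ :=
    (isCompact_univ_pi fun p : ℕ × ℕ => isCompact_Icc).tendsto_subseq hmem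
  have hcau : ∀ p : ℕ × ℕ, CauchySeq fun n => a (φ n) p := by
    intro p
    have ht : Tendsto (fun n => (a ∘ φ) n p) atTop (𝓝 (b p)) :=
      ((continuous_apply p).tendsto b).comp hconv
    exact ht.cauchySeq
  refine ⟨φ, hφ, ?_⟩
  intro ε hε
  have hδpos : 0 < (β - β')/(N:ℝ) := div_pos (by linarith) hNR
  have hkex : ∃ k : ℕ, 2*M*(uk k)^((β-β')/(N:ℝ)) < ε := by
    have h1 : Tendsto uk atTop (𝓝 0) := by
      simp only [hukdef]; exact tendsto_pow_atTop_nhds_zero_of_lt_one (by norm_num) (by norm_num)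
    have h2 : Tendsto (fun k => (uk k)^((β-β')/(N:ℝ))) atTop (𝓝 0) := by
      have hc2 : ContinuousAt (fun z : ℝ => z ^ ((β-β')/(N:ℝ))) 0 :=
        Real.continuousAt_rpow_const 0 _ (Or.inr hδpos.le)
      have h3 := hc2.tendsto.comp h1
      rwa [Real.zero_rpow hδpos.ne'] at h3
    have h3 : Tendsto (fun k => 2*M*(uk k)^((β-β')/(N:ℝ))) atTop (𝓝 0) := by
      simpa using h2.const_mul (2*M)
    exact (h3.eventually_lt_const hε).exists
  obtain ⟨k, hk⟩ := hkex
  set ε' : ℝ := ε / (K0+1) with hε'def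
  have hε'pos : 0 < ε' := div_pos hε (by linarith)
  -- uniform Cauchy at time uk (k+1)
  have UC : ∃ K : ℕ, ∀ m ≥ K, ∀ n ≥ K, ∀ w : Fin d → ℝ,
      |(∫ y : Fin d → ℝ, Γk (uk (k+1)) w y * f (φ m) y)
        - ∫ y : Fin d → ℝ, Γk (uk (k+1)) w y * f (φ n) y| ≤ ε' := by
    have hu2pos : 0 < uk (k+2) := hukpos _
    have hu21 : uk (k+2) ≤ 1 := huk1 _
    set L : ℝ := C * Real.exp (γ*(uk (k+2))) * (M * (uk (k+2)) ^ (β/(N:ℝ))) *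
      (2 * (uk (k+2)) ^ ((-1:ℝ)/(N:ℝ)) * CG) with hLdef
    have hL0 : 0 ≤ L := by
      have h1 : (0:ℝ) ≤ (uk (k+2)) ^ (β/(N:ℝ)) := (Real.rpow_pos_of_pos hu2pos _).le
      have h2 : (0:ℝ) ≤ (uk (k+2)) ^ ((-1:ℝ)/(N:ℝ)) := (Real.rpow_pos_of_pos hu2pos _).le
      exact mul_nonneg (mul_nonneg (mul_nonneg hC.le (Real.exp_pos _).le)
        (mul_nonneg hM0 h1)) (mul_nonneg (mul_nonneg (by norm_num) h2) hCG)
    have hequi : ∀ i : ℕ, ∀ z z' : Fin d → ℝ,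
        |(∫ y : Fin d → ℝ, Γk (uk (k+1)) z y * f i y)
          - ∫ y : Fin d → ℝ, Γk (uk (k+1)) z' y * f i y| ≤ L * sNorm d s (z - z') := by
      intro i z z'
      have h := P6b i (uk (k+2)) hu2pos hu21 z z'
      rwa [← huksplit k] at h
    set η : ℝ := ε' / (3*(L+1)) with hηdef
    have hηpos : 0 < η := div_pos hε'pos (by linarith)
    have hLη : L * η ≤ ε'/3 := by
      have hL1 : L + 1 ≠ 0 := by linarith
      have hstep : L * η ≤ (L+1) * η :=
        mul_le_mul_of_nonneg_right (by linarith) hηpos.le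
      have heq : (L+1) * η = ε'/3 := by
        rw [hηdef]
        field_simp
      linarith
    have hUopen : ∀ i : ℕ, IsOpen {z : Fin d → ℝ | sNorm d s (z - e i) < η} := fun i =>
      isOpen_lt (continuous_sNorm.comp (continuous_id.sub continuous_const)) continuous_const
    have hcover : Set.Icc (0 : Fin d → ℝ) 1 ⊆ ⋃ i : ℕ, {z | sNorm d s (z - e i) < η} := by
      intro z _
      have hzopen : IsOpen {y : Fin d → ℝ | sNorm d s (z - y) < η} :=
        isOpen_lt (continuous_sNorm.comp (continuous_const.sub continuous_id)) continuous_const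
      have hzmem : ({y : Fin d → ℝ | sNorm d s (z - y) < η} : Set _).Nonempty := by
        refine ⟨z, ?_⟩
        simp only [Set.mem_setOf_eq, sub_self, sNorm_zero hs]
        exact hηpos
      obtain ⟨i, hi⟩ := hdense.exists_mem_open hzopen hzmem
      exact Set.mem_iUnion.mpr ⟨i, hi⟩
    obtain ⟨F, hF⟩ := isCompact_Icc.elim_finite_subcover _ hUopen hcover
    have hc3 : 0 < ε'/3 := by linarith
    choose Nf hNf using fun i : ℕ => Metric.cauchySeq_iff.mp (hcau (k+1, i)) (ε'/3) hc3
    refine ⟨F.sup Nf, ?_⟩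
    intro m hm n hn w
    obtain ⟨z, hzIcc, hzeq⟩ := hred (uk (k+1)) (hukpos _) w
    rw [hzeq (φ m), hzeq (φ n)]
    obtain ⟨i, hiF, hiU⟩ := Set.mem_iUnion₂.mp (hF hzIcc)
    have hsn : sNorm d s (z - e i) < η := hiU
    have hmid : |(∫ y : Fin d → ℝ, Γk (uk (k+1)) (e i) y * f (φ m) y)
        - ∫ y : Fin d → ℝ, Γk (uk (k+1)) (e i) y * f (φ n) y| < ε'/3 := by
      have h := hNf i m (le_trans (Finset.le_sup hiF) hm) n (le_trans (Finset.le_sup hiF) hn)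
      rw [Real.dist_eq] at h
      exact h
    have h1 : |(∫ y : Fin d → ℝ, Γk (uk (k+1)) z y * f (φ m) y)
        - ∫ y : Fin d → ℝ, Γk (uk (k+1)) (e i) y * f (φ m) y| ≤ L * sNorm d s (z - e i) :=
      hequi (φ m) z (e i)
    have h2 : |(∫ y : Fin d → ℝ, Γk (uk (k+1)) (e i) y * f (φ n) y)
        - ∫ y : Fin d → ℝ, Γk (uk (k+1)) z y * f (φ n) y| ≤ L * sNorm d s (e i - z) :=
      hequi (φ n) (e i) z
    have hsymm : sNorm d s (e i - z) = sNorm d s (z - e i) := by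
      unfold sNorm
      congr 1
      funext j
      rw [Pi.sub_apply, Pi.sub_apply, abs_sub_comm]
    rw [hsymm] at h2
    have hb1 : L * sNorm d s (z - e i) ≤ L * η := mul_le_mul_of_nonneg_left hsn.le hL0
    have tri : ∀ A A' B' B : ℝ, |A - B| ≤ |A - A'| + |A' - B'| + |B' - B| := by
      intro A A' B' B
      have h0 : A - B = (A - A') + ((A' - B') + (B' - B)) := by ring
      rw [h0]
      refine (abs_add_le _ _).trans ?_
      have := abs_add_le (A' - B') (B' - B)
      linarith
    refine le_trans (tri _ (∫ y : Fin d → ℝ, Γk (uk (k+1)) (e i) y * f (φ m) y)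
      (∫ y : Fin d → ℝ, Γk (uk (k+1)) (e i) y * f (φ n) y) _) ?_
    have := hLη
    linarith
  obtain ⟨K, hK⟩ := UC
  refine ⟨K, ?_⟩
  intro m hm n hn t ht ht1 x
  have htβ' : (1:ℝ) ≤ t ^ (β'/(N:ℝ)) := by
    have h0 : t ^ (0:ℝ) ≤ t ^ (β'/(N:ℝ)) :=
      Real.rpow_le_rpow_of_exponent_ge ht ht1 (le_of_lt (div_neg_of_neg_of_pos (by linarith) hNR))
    rwa [Real.rpow_zero] at h0
  have htβ'pos : 0 < t ^ (β'/(N:ℝ)) := Real.rpow_pos_of_pos ht _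
  have hsplitint : (∫ y : Fin d → ℝ, Γk t x y * (f (φ m) y - f (φ n) y))
      = (∫ y : Fin d → ℝ, Γk t x y * f (φ m) y) - ∫ y : Fin d → ℝ, Γk t x y * f (φ n) y := by
    rw [← integral_sub (hfint (φ m) t ht x) (hfint (φ n) t ht x)]
    congr 1; funext y; ring
  rw [hsplitint]
  by_cases hcase : t ≤ uk k
  · have h1 := hM (φ m) t ht ht1 x
    have h2 := hM (φ n) t ht ht1 x
    have habs2 : |(∫ y : Fin d → ℝ, Γk t x y * f (φ m) y)
        - ∫ y : Fin d → ℝ, Γk t x y * f (φ n) y| ≤ 2 * (M * t ^ (β/(N:ℝ))) := by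
      have htri : ∀ A B : ℝ, |A - B| ≤ |A| + |B| := by
        intro A B
        rw [sub_eq_add_neg]
        exact (abs_add_le _ _).trans (by rw [abs_neg])
      have := htri (∫ y : Fin d → ℝ, Γk t x y * f (φ m) y)
        (∫ y : Fin d → ℝ, Γk t x y * f (φ n) y)
      linarith
    have hexp : t ^ (β/(N:ℝ)) = t ^ ((β-β')/(N:ℝ)) * t ^ (β'/(N:ℝ)) := by
      rw [← Real.rpow_add ht]
      congr 1
      ring
    have hmono : t ^ ((β-β')/(N:ℝ)) ≤ (uk k) ^ ((β-β')/(N:ℝ)) :=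
      Real.rpow_le_rpow ht.le hcase hδpos.le
    calc |(∫ y : Fin d → ℝ, Γk t x y * f (φ m) y)
        - ∫ y : Fin d → ℝ, Γk t x y * f (φ n) y|
        ≤ 2 * (M * t ^ (β/(N:ℝ))) := habs2
      _ = (2*M*t ^ ((β-β')/(N:ℝ))) * t ^ (β'/(N:ℝ)) := by rw [hexp]; ring
      _ ≤ (2*M*(uk k) ^ ((β-β')/(N:ℝ))) * t ^ (β'/(N:ℝ)) := by
          refine mul_le_mul_of_nonneg_right ?_ htβ'pos.le
          refine mul_le_mul_of_nonneg_left hmono ?_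
          linarith
      _ ≤ ε * t ^ (β'/(N:ℝ)) := mul_le_mul_of_nonneg_right hk.le htβ'pos.le
  · push_neg at hcase
    have hu1pos : 0 < uk (k+1) := hukpos _
    have hull : uk (k+1) < uk k := by
      simp only [hukdef]
      exact pow_lt_pow_right_of_lt_one₀ (by norm_num) (by norm_num) (by omega)
    have hta : 0 < t - uk (k+1) := by linarith
    have hta1 : t - uk (k+1) ≤ 1 := by linarith
    have hrw : ∀ i : ℕ, (∫ y : Fin d → ℝ, Γk t x y * f i y)
        = ∫ w : Fin d → ℝ, Γk (t - uk (k+1)) x w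
            * ∫ y : Fin d → ℝ, Γk (uk (k+1)) w y * f i y := by
      intro i
      conv_lhs => rw [show t = (t - uk (k+1)) + uk (k+1) by ring]
      exact P5 i _ _ hta hu1pos x
    rw [hrw (φ m), hrw (φ n)]
    have hVint : ∀ i : ℕ, Integrable fun w => Γk (t - uk (k+1)) x w *
        ∫ y : Fin d → ℝ, Γk (uk (k+1)) w y * f i y :=
      fun i => hmul _ hta x _ (M * (uk (k+1)) ^ (β/(N:ℝ)))
        (hvcont i _ hu1pos).aestronglyMeasurable
        (fun w => hM i _ hu1pos (huk1 _) w)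
    rw [← integral_sub (hVint (φ m)) (hVint (φ n))]
    simp_rw [← mul_sub]
    have hdiffint : Integrable fun w => Γk (t - uk (k+1)) x w *
        ((∫ y : Fin d → ℝ, Γk (uk (k+1)) w y * f (φ m) y)
          - ∫ y : Fin d → ℝ, Γk (uk (k+1)) w y * f (φ n) y) := by
      have h := (hVint (φ m)).sub (hVint (φ n))
      simpa [mul_sub, Pi.sub_def] using h
    have hfin : K0 * ε' ≤ ε := by
      have h1 : K0 * ε' = ε * (K0/(K0+1)) := by
        rw [hε'def]; field_simp
      rw [h1]
      have h2 : K0/(K0+1) ≤ 1 := (div_le_one (by linarith)).mpr (by linarith)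
      nlinarith
    calc |∫ w : Fin d → ℝ, Γk (t - uk (k+1)) x w *
          ((∫ y : Fin d → ℝ, Γk (uk (k+1)) w y * f (φ m) y)
            - ∫ y : Fin d → ℝ, Γk (uk (k+1)) w y * f (φ n) y)|
        ≤ ∫ w : Fin d → ℝ, |Γk (t - uk (k+1)) x w *
            ((∫ y : Fin d → ℝ, Γk (uk (k+1)) w y * f (φ m) y)
              - ∫ y : Fin d → ℝ, Γk (uk (k+1)) w y * f (φ n) y)| := by
          have hni := norm_integral_le_integral_norm (μ := volume)
            (fun w => Γk (t - uk (k+1)) x w *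
              ((∫ y : Fin d → ℝ, Γk (uk (k+1)) w y * f (φ m) y)
                - ∫ y : Fin d → ℝ, Γk (uk (k+1)) w y * f (φ n) y))
          simp only [Real.norm_eq_abs] at hni
          exact hni
      _ ≤ ∫ w : Fin d → ℝ, |Γk (t - uk (k+1)) x w| * ε' := by
          refine integral_mono hdiffint.abs ((hΓint _ hta x).abs.mul_const ε') fun w => ?_
          rw [abs_mul]
          exact mul_le_mul_of_nonneg_left (hK m hm n hn w) (abs_nonneg _)
      _ = (∫ w : Fin d → ℝ, |Γk (t - uk (k+1)) x w|) * ε' := by rw [integral_mul_const]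
      _ ≤ K0 * ε' := mul_le_mul_of_nonneg_right (habs _ hta hta1 x) hε'pos.le
      _ ≤ ε := hfin
      _ ≤ ε * t ^ (β'/(N:ℝ)) := le_mul_of_one_le_right hε.le htβ'
end

section
/- Let 𝔎 be a compact subset of (0,∞). For any M ∈ ℕ and k ∈ ℕ there exist constants C, c' > 0 such that for all λ, μ ∈ 𝔎, t > 0 and x ∈ ℝ: |∂_x^k Z_t^μ(x) − Σ_{n=0}^{M−1} ((μ−λ)^n / n!) · t^n · ∂_x^{2n+k} Z_t^λ(x)| ≤ C |μ−λ|^M · t^{(−k−1)/2} · exp(−c' x²/t). -/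
open MeasureTheory Real Polynomial

noncomputable def Zker (c lam t x : ℝ) : ℝ :=
  if 0 < t then
    Real.exp (-c * t) * (Real.sqrt (4 * Real.pi * lam * t))⁻¹ *
      Real.exp (-x ^ 2 / (4 * lam * t))
  else 0

lemma iterDeriv_const_mul (K : ℝ) (f : ℝ → ℝ) (n : ℕ) :
    iteratedDeriv n (fun w => K * f w) = fun x => K * iteratedDeriv n f x := by
  induction n with
  | zero => simp
  | succ n ih =>
    funext x
    rw [iteratedDeriv_succ, ih, iteratedDeriv_succ]
    exact deriv_const_mul_field K

lemma contDiff_gauss {n : ℕ∞} : ContDiff ℝ n (fun y : ℝ => Real.exp (-(y ^ 2 / 2))) :=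
  Real.contDiff_exp.comp (((contDiff_id.pow 2).div_const 2).neg)

lemma Zker_iteratedDeriv (c lam t : ℝ) (ht : 0 < t) (hlam : 0 < lam) (n : ℕ) (x : ℝ) :
    iteratedDeriv n (fun w => Zker c lam t w) x =
      Real.exp (-c * t) * (Real.sqrt (2 * Real.pi))⁻¹ * (-1 : ℝ) ^ n *
        ((Real.sqrt (2 * lam * t))⁻¹) ^ (n + 1) *
        (aeval ((Real.sqrt (2 * lam * t))⁻¹ * x) (hermite n)) *
        Real.exp (-(((Real.sqrt (2 * lam * t))⁻¹ * x) ^ 2 / 2)) := by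
  have hbpos : (0 : ℝ) < Real.sqrt (2 * lam * t) := Real.sqrt_pos.2 (by positivity)
  set b := Real.sqrt (2 * lam * t) with hbdef
  have hb2 : b ^ 2 = 2 * lam * t := Real.sq_sqrt (by positivity)
  have hfun : (fun w => Zker c lam t w)
      = fun w => (Real.exp (-c * t) * (Real.sqrt (2 * Real.pi))⁻¹ * b⁻¹) *
          (fun y => Real.exp (-(y ^ 2 / 2))) (b⁻¹ * w) := by
    funext w
    simp only [Zker, if_pos ht]
    have h1 : Real.sqrt (4 * Real.pi * lam * t) = Real.sqrt (2 * Real.pi) * b := by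
      rw [hbdef, ← Real.sqrt_mul (by positivity)]
      ring_nf
    have h2 : -((b⁻¹ * w) ^ 2 / 2) = -w ^ 2 / (4 * lam * t) := by
      rw [mul_pow, inv_pow, hb2]
      field_simp
      ring
    rw [h1, h2, mul_inv]
    ring
  rw [hfun, iterDeriv_const_mul, iteratedDeriv_comp_const_mul contDiff_gauss b⁻¹]
  simp only [iteratedDeriv_eq_iterate, Polynomial.deriv_gaussian_eq_hermite_mul_gaussian]
  rw [pow_succ]
  ring

lemma my_derivative_hermite (n : ℕ) :
    derivative (hermite (n + 1)) = ((n : ℤ[X]) + 1) * hermite n := by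
  induction n with
  | zero => simp [hermite_one, hermite_zero]
  | succ n ih =>
    rw [hermite_succ (n + 1), derivative_sub, derivative_mul, derivative_X, ih,
      hermite_succ n]
    rw [derivative_mul]
    push_cast
    simp only [derivative_add, derivative_one, Polynomial.derivative_natCast,
      derivative_ofNat]
    ring

lemma hermite_add_two (n : ℕ) :
    hermite (n + 2) = X ^ 2 * hermite n - X * derivative (hermite n)
      - ((n : ℤ[X]) + 1) * hermite n := by
  rw [show n + 2 = (n + 1) + 1 from rfl, hermite_succ, my_derivative_hermite,
    hermite_succ]
  ring

lemma aeval_hermite_add_two (n : ℕ) (u : ℝ) :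
    (aeval u (hermite (n + 2)) : ℝ) =
      u ^ 2 * aeval u (hermite n) - u * aeval u (derivative (hermite n))
        - ((n : ℝ) + 1) * aeval u (hermite n) := by
  rw [hermite_add_two]
  simp

lemma hasDerivAt_Zker_iter (c t x : ℝ) (ht : 0 < t) (n : ℕ) {lam : ℝ} (hlam : 0 < lam) :
    HasDerivAt (fun ν => iteratedDeriv n (fun w => Zker c ν t w) x)
      (t * iteratedDeriv (n + 2) (fun w => Zker c lam t w) x) lam := by
  have hbpos : (0:ℝ) < Real.sqrt (2*lam*t) := Real.sqrt_pos.2 (by positivity)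
  set r : ℝ → ℝ := fun ν => (Real.sqrt (2*ν*t))⁻¹ with hrdef
  set r' : ℝ := -t * (r lam)^3 with hr'def
  -- derivative of r
  have h1 : HasDerivAt (fun ν : ℝ => 2*ν*t) (2*t) lam := by
    simpa using ((hasDerivAt_id lam).const_mul 2).mul_const t
  have h2 : HasDerivAt (fun ν => Real.sqrt (2*ν*t)) (1/(2*Real.sqrt (2*lam*t)) * (2*t)) lam :=
    (Real.hasDerivAt_sqrt (by positivity)).comp lam h1
  have hr : HasDerivAt r r' lam := by
    have h3 := h2.inv (ne_of_gt hbpos)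
    refine h3.congr_deriv ?_
    rw [hr'def, hrdef]
    have hb0 : Real.sqrt (2*lam*t) ≠ 0 := ne_of_gt hbpos
    field_simp
  have hrx : HasDerivAt (fun ν => r ν * x) (r' * x) lam := hr.mul_const x
  have hP : HasDerivAt (fun ν => (aeval (r ν * x) (hermite n) : ℝ))
      ((aeval (r lam * x) (derivative (hermite n)) : ℝ) * (r' * x)) lam :=
    by have h := ((hermite n).hasDerivAt_aeval (r lam * x)).comp lam hrx; exact h
  have hinner : HasDerivAt (fun ν => -((r ν * x)^2/2))
      (-(((2:ℕ) * (r lam * x)^1 * (r' * x))/2)) lam := ((hrx.pow 2).div_const 2).neg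
  have hgauss : HasDerivAt (fun ν => Real.exp (-((r ν * x)^2/2)))
      (Real.exp (-((r lam * x)^2/2)) * (-(((2:ℕ) * (r lam * x)^1 * (r' * x))/2))) lam :=
    hinner.exp
  have hpow : HasDerivAt (fun ν => (r ν)^(n+1)) (((n+1:ℕ):ℝ) * (r lam)^n * r') lam := by
    exact (hr.pow (n+1)).congr_deriv (by simp)
  set A : ℝ := Real.exp (-c*t) * (Real.sqrt (2*Real.pi))⁻¹ with hAdef
  have hF := (((hpow.mul hP).mul hgauss).const_mul (A * (-1:ℝ)^n))
  have hkey : (fun ν => iteratedDeriv n (fun w => Zker c ν t w) x)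
      =ᶠ[nhds lam] (fun ν => (A * (-1:ℝ)^n) *
        ((r ν)^(n+1) * (aeval (r ν * x) (hermite n) : ℝ) * Real.exp (-((r ν * x)^2/2)))) := by
    filter_upwards [isOpen_Ioi.mem_nhds (Set.mem_Ioi.mpr hlam)] with ν hν
    rw [Zker_iteratedDeriv c ν t ht hν n x]
    ring
  have hF' := hF.congr_of_eventuallyEq hkey
  refine hF'.congr_deriv ?_
  rw [Zker_iteratedDeriv c lam t ht hlam (n+2) x, aeval_hermite_add_two]
  rw [hr'def]
  push_cast
  simp only [Pi.mul_apply]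
  ring

lemma taylor_bound {s : Set ℝ} (hs : Convex ℝ s) :
    ∀ (M : ℕ) (f : ℕ → ℝ → ℝ) (B : ℝ),
    (∀ n < M, ∀ ν ∈ s, HasDerivAt (f n) (f (n+1) ν) ν) →
    (∀ ν ∈ s, |f M ν| ≤ B) →
    ∀ lam ∈ s, ∀ mu ∈ s,
      |f 0 mu - ∑ n ∈ Finset.range M, f n lam * ((mu - lam)^n / n.factorial)| ≤
        B * |mu - lam| ^ M := by
  intro M
  induction M with
  | zero =>
    intro f B _ hB lam hlam mu hmu
    simpa using hB mu hmu
  | succ M ih =>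
    intro f B hderiv hB lam hlam mu hmu
    have hB0 : 0 ≤ B := le_trans (abs_nonneg _) (hB lam hlam)
    set g : ℝ → ℝ := fun ν =>
      f 0 ν - ∑ n ∈ Finset.range (M+1), f n lam * ((ν - lam)^n / n.factorial) with hgdef
    have hglam : g lam = 0 := by
      rw [hgdef]
      simp only
      rw [Finset.sum_eq_single_of_mem 0 (Finset.mem_range.mpr (Nat.succ_pos M))]
      · simp
      · intro n _ hn
        simp [zero_pow hn]
    have hIH := ih (fun n => f (n+1)) B
      (fun n hn ν hν => hderiv (n+1) (Nat.succ_lt_succ hn) ν hν)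
      (fun ν hν => hB ν hν) lam hlam
    -- derivative of g
    have hg : ∀ ν ∈ s, HasDerivAt g
        (f 1 ν - ∑ n ∈ Finset.range M, f (n+1) lam * ((ν - lam)^n / n.factorial)) ν := by
      intro ν hν
      have hsum : HasDerivAt (fun ν => ∑ n ∈ Finset.range (M+1),
          f n lam * ((ν - lam)^n / n.factorial))
          (∑ n ∈ Finset.range (M+1),
            f n lam * ((n : ℝ) * (ν - lam)^(n-1) * 1 / n.factorial)) ν := by
        apply HasDerivAt.fun_sum
        intro n _
        exact ((((hasDerivAt_id' ν).sub_const lam).pow n).div_const _).const_mul (f n lam)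
      have := (hderiv 0 (Nat.succ_pos M) ν hν).sub hsum
      refine this.congr_deriv ?_
      congr 1
      rw [Finset.sum_range_succ']
      rw [eq_comm]
      have heq : ∀ n ∈ Finset.range M,
          f (n+1) lam * ((((n+1:ℕ):ℝ)) * (ν - lam)^(n+1-1) * 1 / ((n+1).factorial : ℝ))
            = f (n+1) lam * ((ν - lam)^n / n.factorial) := by
        intro n _
        rw [Nat.factorial_succ]
        push_cast
        have h1 : ((n:ℝ) + 1) ≠ 0 := by positivity
        have h2 : ((n.factorial : ℝ)) ≠ 0 := Nat.cast_ne_zero.mpr n.factorial_ne_zero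
        field_simp
      rw [Finset.sum_congr rfl heq]
      simp
    -- mean value on uIcc
    have huIcc : Set.uIcc lam mu ⊆ s := hs.ordConnected.uIcc_subset hlam hmu
    have hbound : ∀ ν ∈ Set.uIcc lam mu,
        ‖f 1 ν - ∑ n ∈ Finset.range M, f (n+1) lam * ((ν - lam)^n / n.factorial)‖ ≤
          B * |mu - lam| ^ M := by
      intro ν hν
      have h1 := hIH ν (huIcc hν)
      rw [Real.norm_eq_abs]
      refine le_trans h1 ?_
      have : |ν - lam| ≤ |mu - lam| := by
        rcases le_total lam mu with h | h
        · rw [Set.uIcc_of_le h] at hν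
          rw [abs_of_nonneg (by linarith [hν.1]), abs_of_nonneg (by linarith)]
          linarith [hν.2]
        · rw [Set.uIcc_of_ge h] at hν
          rw [abs_of_nonpos (by linarith [hν.2]), abs_of_nonpos (by linarith)]
          linarith [hν.1]
      gcongr
    have hmv := (convex_uIcc lam mu).norm_image_sub_le_of_norm_hasDerivWithin_le
      (fun ν hν => (hg ν (huIcc hν)).hasDerivWithinAt) hbound
      Set.left_mem_uIcc Set.right_mem_uIcc
    rw [hglam, sub_zero, Real.norm_eq_abs, Real.norm_eq_abs] at hmv
    calc |f 0 mu - ∑ n ∈ Finset.range (M+1), f n lam * ((mu - lam)^n / n.factorial)|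
        = |g mu| := rfl
      _ ≤ B * |mu - lam| ^ M * |mu - lam| := hmv
      _ = B * |mu - lam| ^ (M+1) := by rw [pow_succ]; ring

lemma abs_pow_mul_exp_le (i : ℕ) (u : ℝ) :
    |u| ^ i * Real.exp (-(u^2/4)) ≤ 1 + 4 ^ i * i.factorial := by
  have he : Real.exp (-(u^2/4)) ≤ 1 := Real.exp_le_one_iff.mpr (by nlinarith [sq_nonneg u])
  have he0 : (0:ℝ) ≤ Real.exp (-(u^2/4)) := (Real.exp_pos _).le
  have hpow : |u| ^ i ≤ 1 + (u^2) ^ i := by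
    rcases le_total (|u|) 1 with h | h
    · have h1 : |u| ^ i ≤ 1 := pow_le_one₀ (abs_nonneg u) h
      have h2 : (0:ℝ) ≤ (u^2)^i := by positivity
      linarith
    · have h1 : |u| ^ i ≤ (|u|^2) ^ i := by
        rw [← pow_mul]
        exact pow_le_pow_right₀ h (by omega)
      rw [sq_abs] at h1
      linarith
  have h2 : ((u^2/4):ℝ)^i ≤ Real.exp (u^2/4) * i.factorial := by
    have h := Real.pow_div_factorial_le_exp (x := u^2/4) (by positivity) i
    rw [div_le_iff₀ (by positivity : (0:ℝ) < (i.factorial:ℝ))] at h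
    exact h
  have h5 : Real.exp (-(u^2/4)) * Real.exp (u^2/4) = 1 := by
    rw [← Real.exp_add]; simp
  have h6 : (u^2/4)^i * Real.exp (-(u^2/4)) ≤ i.factorial :=
    calc (u^2/4)^i * Real.exp (-(u^2/4))
        ≤ Real.exp (u^2/4) * i.factorial * Real.exp (-(u^2/4)) :=
          mul_le_mul_of_nonneg_right h2 he0
      _ = (i.factorial : ℝ) * (Real.exp (-(u^2/4)) * Real.exp (u^2/4)) := by ring
      _ = i.factorial := by rw [h5, mul_one]
  have h3 : ((u^2):ℝ)^i = 4^i * (u^2/4)^i := by rw [div_pow]; field_simp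
  have hmain : (u^2)^i * Real.exp (-(u^2/4)) ≤ (4:ℝ) ^ i * (i.factorial : ℝ) := by
    calc (u^2)^i * Real.exp (-(u^2/4))
        = (4:ℝ)^i * ((u^2/4)^i * Real.exp (-(u^2/4))) := by rw [h3]; ring
      _ ≤ (4:ℝ)^i * (i.factorial : ℝ) := mul_le_mul_of_nonneg_left h6 (by positivity)
  calc |u| ^ i * Real.exp (-(u^2/4))
      ≤ (1 + (u^2)^i) * Real.exp (-(u^2/4)) :=
        mul_le_mul_of_nonneg_right hpow he0
    _ = Real.exp (-(u^2/4)) + (u^2)^i * Real.exp (-(u^2/4)) := by ring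
    _ ≤ 1 + 4^i * i.factorial := by linarith

lemma hermite_gauss_bound (m : ℕ) : ∃ CH > (0:ℝ), ∀ u : ℝ,
    |(aeval u (hermite m) : ℝ)| * Real.exp (-(u^2/4)) ≤ CH := by
  set p : Polynomial ℝ := (hermite m).map (algebraMap ℤ ℝ) with hpdef
  set d : ℕ := p.natDegree with hddef
  have hsum0 : (0:ℝ) ≤ ∑ i ∈ Finset.range (d+1), |p.coeff i| * (1 + 4^i * i.factorial) :=
    Finset.sum_nonneg fun i _ => by positivity
  refine ⟨(∑ i ∈ Finset.range (d+1), |p.coeff i| * (1 + 4^i * i.factorial)) + 1,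
    by linarith, ?_⟩
  intro u
  have heval : (aeval u (hermite m) : ℝ) = p.eval u := by
    rw [hpdef, aeval_def, eval_map]
  rw [heval]
  have he : (0:ℝ) ≤ Real.exp (-(u^2/4)) := (Real.exp_pos _).le
  have h1 : |p.eval u| ≤ ∑ i ∈ Finset.range (d+1), |p.coeff i| * |u|^i := by
    conv_lhs => rw [Polynomial.eval_eq_sum_range]
    refine le_trans (Finset.abs_sum_le_sum_abs _ _) ?_
    refine Finset.sum_le_sum fun i _ => ?_
    rw [abs_mul, abs_pow]
  calc |p.eval u| * Real.exp (-(u^2/4))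
      ≤ (∑ i ∈ Finset.range (d+1), |p.coeff i| * |u|^i) * Real.exp (-(u^2/4)) :=
        mul_le_mul_of_nonneg_right h1 he
    _ = ∑ i ∈ Finset.range (d+1), |p.coeff i| * (|u|^i * Real.exp (-(u^2/4))) := by
        rw [Finset.sum_mul]; congr 1; funext i; ring
    _ ≤ ∑ i ∈ Finset.range (d+1), |p.coeff i| * (1 + 4^i * i.factorial) :=
        Finset.sum_le_sum fun i _ =>
          mul_le_mul_of_nonneg_left (abs_pow_mul_exp_le i u) (abs_nonneg _)
    _ ≤ _ := by linarith

lemma tpow_eq (t : ℝ) (ht : 0 < t) (k : ℕ) :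
    ((Real.sqrt t)⁻¹) ^ (k+1) = t ^ ((-(k:ℝ) - 1) / 2) := by
  rw [Real.sqrt_eq_rpow, ← Real.rpow_neg ht.le, ← Real.rpow_natCast (t ^ (-(1/2:ℝ))) (k+1),
    ← Real.rpow_mul ht.le]
  congr 1
  push_cast
  ring

lemma Zker_bound (c : ℝ) (hc : 0 ≤ c) {a₁ a₂ : ℝ} (ha₁ : 0 < a₁) (M k : ℕ) {CH : ℝ}
    (hCHpos : 0 < CH)
    (hCH : ∀ u : ℝ, |(aeval u (hermite (2*M+k)) : ℝ)| * Real.exp (-(u^2/4)) ≤ CH)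
    {ν : ℝ} (hν : ν ∈ Set.Icc a₁ a₂) {t : ℝ} (ht : 0 < t) (x : ℝ) :
    |t^M * iteratedDeriv (2*M+k) (fun w => Zker c ν t w) x| ≤
      (CH * ((Real.sqrt (2*a₁))⁻¹)^(2*M+k+1)) * t ^ ((-(k:ℝ)-1)/2) *
        Real.exp (-(1/(8*a₂)) * x^2 / t) := by
  have hν0 : 0 < ν := lt_of_lt_of_le ha₁ hν.1
  have ha₂ : 0 < a₂ := lt_of_lt_of_le hν0 hν.2
  have hrpos : (0:ℝ) < (Real.sqrt (2*ν*t))⁻¹ := by positivity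
  set r : ℝ := (Real.sqrt (2*ν*t))⁻¹ with hrdef
  rw [Zker_iteratedDeriv c ν t ht hν0 (2*M+k) x]
  have habs : |t^M * (Real.exp (-c*t) * (Real.sqrt (2*Real.pi))⁻¹ * (-1:ℝ)^(2*M+k) *
        r^(2*M+k+1) * (aeval (r*x) (hermite (2*M+k)) : ℝ) * Real.exp (-((r*x)^2/2)))|
      = t^M * (Real.exp (-c*t) * (Real.sqrt (2*Real.pi))⁻¹ *
        r^(2*M+k+1) * |(aeval (r*x) (hermite (2*M+k)) : ℝ)| * Real.exp (-((r*x)^2/2))) := by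
    simp only [abs_mul, abs_pow, abs_neg, abs_one, one_pow, mul_one, abs_inv]
    rw [abs_of_pos ht, abs_of_pos (Real.exp_pos _), abs_of_pos (Real.exp_pos _),
      abs_of_pos (Real.sqrt_pos.2 (by positivity) : (0:ℝ) < Real.sqrt (2*Real.pi)),
      abs_of_pos hrpos]
  rw [habs]
  have hexp1 : Real.exp (-c*t) ≤ 1 := Real.exp_le_one_iff.mpr (by nlinarith)
  have hexp2 : (Real.sqrt (2*Real.pi))⁻¹ ≤ 1 := by
    have h1 : (1:ℝ) ≤ Real.sqrt (2*Real.pi) := by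
      rw [show (1:ℝ) = Real.sqrt 1 by simp]
      exact Real.sqrt_le_sqrt (by nlinarith [Real.pi_gt_three])
    exact inv_le_one_of_one_le₀ h1
  have hu2 : (r*x)^2 = x^2 / (2*ν*t) := by
    rw [mul_pow, hrdef, inv_pow, Real.sq_sqrt (by positivity)]
    ring
  have hexp3 : Real.exp (-(((r*x))^2/4)) ≤ Real.exp (-(1/(8*a₂)) * x^2 / t) := by
    rw [Real.exp_le_exp]
    have h1 : -(1/(8*a₂)) * x^2 / t = -(x^2 / (8*a₂*t)) := by
      field_simp
    rw [h1, hu2, neg_le_neg_iff, div_div, div_le_div_iff₀ (by positivity) (by positivity)]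
    nlinarith [mul_nonneg (sq_nonneg x) ht.le, hν.2]
  have hpowsplit : t^M * r^(2*M+k+1)
      = ((Real.sqrt (2*ν))⁻¹)^(2*M+k+1) * t ^ ((-(k:ℝ)-1)/2) := by
    have h1 : r = (Real.sqrt (2*ν))⁻¹ * (Real.sqrt t)⁻¹ := by
      rw [hrdef, Real.sqrt_mul (by positivity), mul_inv]
    rw [h1, mul_pow, show 2*M+k+1 = 2*M+(k+1) by omega,
      pow_add ((Real.sqrt t)⁻¹) (2*M) (k+1), tpow_eq t ht k]
    have h2 : t^M * ((Real.sqrt t)⁻¹)^(2*M) = 1 := by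
      have h3 : (Real.sqrt t)^(2*M) = t^M := by rw [pow_mul, Real.sq_sqrt ht.le]
      rw [inv_pow, h3, mul_inv_cancel₀ (pow_ne_zero M (ne_of_gt ht))]
    calc t^M * (((Real.sqrt (2*ν))⁻¹)^(2*M+(k+1)) *
          (((Real.sqrt t)⁻¹)^(2*M) * t ^ ((-(k:ℝ)-1)/2)))
        = ((Real.sqrt (2*ν))⁻¹)^(2*M+(k+1)) * t ^ ((-(k:ℝ)-1)/2) *
          (t^M * ((Real.sqrt t)⁻¹)^(2*M)) := by ring
      _ = ((Real.sqrt (2*ν))⁻¹)^(2*M+(k+1)) * t ^ ((-(k:ℝ)-1)/2) := by rw [h2, mul_one]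
  have hinvle : (Real.sqrt (2*ν))⁻¹ ≤ (Real.sqrt (2*a₁))⁻¹ := by
    have hpos : (0:ℝ) < Real.sqrt (2*a₁) := Real.sqrt_pos.2 (by linarith)
    have hle : Real.sqrt (2*a₁) ≤ Real.sqrt (2*ν) := Real.sqrt_le_sqrt (by linarith [hν.1])
    exact inv_anti₀ hpos hle
  calc t^M * (Real.exp (-c*t) * (Real.sqrt (2*Real.pi))⁻¹ *
        r^(2*M+k+1) * |(aeval (r*x) (hermite (2*M+k)) : ℝ)| * Real.exp (-((r*x)^2/2)))
      ≤ t^M * (1 * 1 *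
        r^(2*M+k+1) * |(aeval (r*x) (hermite (2*M+k)) : ℝ)| * Real.exp (-((r*x)^2/2))) := by
        gcongr <;> positivity
    _ = t^M * r^(2*M+k+1) *
        (|(aeval (r*x) (hermite (2*M+k)) : ℝ)| * Real.exp (-((r*x)^2/4))) *
        Real.exp (-((r*x)^2/4)) := by
        rw [show -((r*x)^2/2) = -((r*x)^2/4) + -((r*x)^2/4) by ring, Real.exp_add]
        ring
    _ ≤ t^M * r^(2*M+k+1) * CH * Real.exp (-((r*x)^2/4)) := by
        have := hCH (r*x)
        gcongr
    _ ≤ t^M * r^(2*M+k+1) * CH * Real.exp (-(1/(8*a₂)) * x^2 / t) := by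
        gcongr
    _ = (CH * ((Real.sqrt (2*ν))⁻¹)^(2*M+k+1)) * t ^ ((-(k:ℝ)-1)/2) *
        Real.exp (-(1/(8*a₂)) * x^2 / t) := by
        rw [show t^M * r^(2*M+k+1) * CH = CH * (t^M * r^(2*M+k+1)) by ring, hpowsplit]
        ring
    _ ≤ (CH * ((Real.sqrt (2*a₁))⁻¹)^(2*M+k+1)) * t ^ ((-(k:ℝ)-1)/2) *
        Real.exp (-(1/(8*a₂)) * x^2 / t) := by
        exact mul_le_mul_of_nonneg_right (mul_le_mul_of_nonneg_right
          (mul_le_mul_of_nonneg_left (pow_le_pow_left₀ (by positivity) hinvle _) hCHpos.le)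
          (by positivity)) (by positivity)

/-- Taylor expansion of `Z^μ` around `Z^λ` in the diffusivity: for a compact set
`𝔎 ⊂ (0,∞)` and any `M, k ∈ ℕ` there are `C, c' > 0` with
`|∂_x^k Z_t^μ(x) − Σ_{n<M} ((μ−λ)^n/n!) tⁿ ∂_x^{2n+k} Z_t^λ(x)|
  ≤ C |μ−λ|^M t^{(−k−1)/2} exp(−c' x²/t)` for all `λ, μ ∈ 𝔎`, `t > 0`, `x ∈ ℝ`. -/
theorem stmt10 (c : ℝ) (hc : 0 ≤ c)
    (𝔎 : Set ℝ) (h𝔎 : IsCompact 𝔎) (h𝔎' : 𝔎 ⊆ Set.Ioi 0)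
    (M k : ℕ) :
    ∃ C > (0:ℝ), ∃ c' > (0:ℝ), ∀ lam ∈ 𝔎, ∀ mu ∈ 𝔎, ∀ t > (0:ℝ), ∀ x : ℝ,
      |iteratedDeriv k (fun w => Zker c mu t w) x -
          ∑ n ∈ Finset.range M, ((mu - lam) ^ n / (n.factorial : ℝ)) * t ^ n *
            iteratedDeriv (2 * n + k) (fun w => Zker c lam t w) x| ≤
        C * |mu - lam| ^ M * t ^ ((-(k : ℝ) - 1) / 2) * Real.exp (-c' * x ^ 2 / t) := by
  rcases Set.eq_empty_or_nonempty 𝔎 with hemp | hne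
  · exact ⟨1, one_pos, 1, one_pos, fun lam hlam => by simp [hemp] at hlam⟩
  obtain ⟨CH, hCHpos, hCH⟩ := hermite_gauss_bound (2*M+k)
  set a₁ := sInf 𝔎 with ha₁def
  set a₂ := sSup 𝔎 with ha₂def
  have ha₁mem : a₁ ∈ 𝔎 := h𝔎.sInf_mem hne
  have ha₂mem : a₂ ∈ 𝔎 := h𝔎.sSup_mem hne
  have ha₁ : 0 < a₁ := h𝔎' ha₁mem
  have ha₂ : 0 < a₂ := h𝔎' ha₂mem
  have hsub : 𝔎 ⊆ Set.Icc a₁ a₂ := fun z hz =>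
    ⟨csInf_le h𝔎.bddBelow hz, le_csSup h𝔎.bddAbove hz⟩
  refine ⟨CH * ((Real.sqrt (2*a₁))⁻¹)^(2*M+k+1),
    mul_pos hCHpos (pow_pos (inv_pos.2 (Real.sqrt_pos.2 (by linarith))) _),
    1/(8*a₂), one_div_pos.mpr (by linarith), ?_⟩
  intro lam hlam mu hmu t ht x
  set B := (CH * ((Real.sqrt (2*a₁))⁻¹)^(2*M+k+1)) * t ^ ((-(k:ℝ)-1)/2) *
    Real.exp (-(1/(8*a₂)) * x^2 / t) with hBdef
  have hderiv : ∀ n < M, ∀ ν ∈ Set.Icc a₁ a₂,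
      HasDerivAt (fun ν => t^n * iteratedDeriv (2*n+k) (fun w => Zker c ν t w) x)
        (t^(n+1) * iteratedDeriv (2*(n+1)+k) (fun w => Zker c ν t w) x) ν := by
    intro n _ ν hν
    have hν0 : 0 < ν := lt_of_lt_of_le ha₁ hν.1
    have h := (hasDerivAt_Zker_iter c t x ht (2*n+k) hν0).const_mul (t^n)
    have hidx : 2*(n+1)+k = 2*n+k+2 := by omega
    rw [hidx]
    refine h.congr_deriv ?_
    rw [pow_succ]
    ring
  have hB : ∀ ν ∈ Set.Icc a₁ a₂,
      |t^M * iteratedDeriv (2*M+k) (fun w => Zker c ν t w) x| ≤ B :=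
    fun ν hν => Zker_bound c hc ha₁ M k hCHpos hCH hν ht x
  have htb := taylor_bound (convex_Icc a₁ a₂) M
    (fun n ν => t^n * iteratedDeriv (2*n+k) (fun w => Zker c ν t w) x) B
    hderiv hB lam (hsub hlam) mu (hsub hmu)
  have hL : iteratedDeriv k (fun w => Zker c mu t w) x
      = t^0 * iteratedDeriv (2*0+k) (fun w => Zker c mu t w) x := by norm_num
  have hsum : ∑ n ∈ Finset.range M, ((mu - lam) ^ n / (n.factorial : ℝ)) * t ^ n *
        iteratedDeriv (2 * n + k) (fun w => Zker c lam t w) x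
      = ∑ n ∈ Finset.range M, (t^n * iteratedDeriv (2*n+k) (fun w => Zker c lam t w) x) *
        ((mu - lam)^n / n.factorial) :=
    Finset.sum_congr rfl (fun n _ => by ring)
  rw [hL, hsum]
  refine le_trans htb ?_
  rw [hBdef]
  apply le_of_eq
  ring
end
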